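/- arXiv:1710.01074 — 4 statements merged into one kernel-verified Lean document; each statement's English description precedes it below -/
import Mathlib

section
/- Generalized Leibniz identity (Caputo case): for 0 < α < 1 and φ ∈ C^1([0,T]), ∂_t^α (t φ(t)) = t ∂_t^α φ(t) + α I^{1−α} φ(t) + t ω_{1−α}(t) φ(0), where ∂_t^α ψ(t) = ∫_0^t ω_{1−α}(t−s) ψ'(s) ds is the Caputo derivative. -/
open MeasureTheory

noncomputable def w (γ t : ℝ) : ℝ := t ^ (γ - 1) / Real.Gamma γ

theorem Caputo_Leibniz (T α : ℝ) (hT : 0 < T) (h0 : 0 < α) (h1 : α < 1)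
    (φ φ' : ℝ → ℝ) (hderiv : ∀ s, HasDerivAt φ (φ' s) s) (hcont : Continuous φ')
    (t : ℝ) (ht : t ∈ Set.Ioc (0:ℝ) T) :
    ∫ s in (0:ℝ)..t, w (1 - α) (t - s) * (φ s + s * φ' s)
      = t * (∫ s in (0:ℝ)..t, w (1 - α) (t - s) * φ' s)
        + α * (∫ s in (0:ℝ)..t, w (1 - α) (t - s) * φ s)
        + t * w (1 - α) t * φ 0 := by
  obtain ⟨ht0, htT⟩ := ht
  have hα1 : (0:ℝ) < 1 - α := by linarith
  set c := Real.Gamma (1 - α) with hc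
  have hcpos : 0 < c := Real.Gamma_pos_of_pos hα1
  have hφcont : Continuous φ := continuous_iff_continuousAt.mpr fun s => (hderiv s).continuousAt
  set g : ℝ → ℝ := fun s => (t - s) ^ (-α) with hgdef
  -- integrability of g
  have hg : IntervalIntegrable g volume 0 t := by
    have h1' : IntervalIntegrable (fun x : ℝ => x ^ (-α)) volume 0 t :=
      intervalIntegral.intervalIntegrable_rpow' (by linarith)
    simpa [hgdef] using (h1'.comp_sub_left t).symm
  have hI1 : IntervalIntegrable (fun s => g s * φ s) volume 0 t :=
    hg.mul_continuousOn hφcont.continuousOn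
  have hI2 : IntervalIntegrable (fun s => g s * φ' s) volume 0 t :=
    hg.mul_continuousOn hcont.continuousOn
  have hI3 : IntervalIntegrable (fun s => g s * (s * φ' s)) volume 0 t :=
    hg.mul_continuousOn ((continuous_id.mul hcont).continuousOn)
  set I₁ := ∫ s in (0:ℝ)..t, g s * φ s with hI1d
  set I₂ := ∫ s in (0:ℝ)..t, g s * φ' s with hI2d
  set I₃ := ∫ s in (0:ℝ)..t, g s * (s * φ' s) with hI3d
  -- continuity of (t - s)^(1-α)
  have hpow_cont : Continuous (fun s : ℝ => (t - s) ^ (1 - α)) :=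
    (Real.continuous_rpow_const (le_of_lt hα1)).comp (continuous_const.sub continuous_id)
  -- FTC key identity
  have key : t * I₂ - I₃ - (1 - α) * I₁ = -(t ^ (1 - α) * φ 0) := by
    have hF : ∀ s ∈ Set.Ioo (0:ℝ) t,
        HasDerivAt (fun s => (t - s) ^ (1 - α) * φ s)
          ((-1) * (1 - α) * (t - s) ^ (1 - α - 1) * φ s + (t - s) ^ (1 - α) * φ' s) s := by
      intro s hs
      have hts : t - s ≠ 0 := by
        have := hs.2; intro h; nlinarith
      have hd1 : HasDerivAt (fun s : ℝ => t - s) (-1) s := by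
        simpa using (hasDerivAt_id s).const_sub t
      exact (hd1.rpow_const (Or.inl hts)).mul (hderiv s)
    have hcontF : ContinuousOn (fun s => (t - s) ^ (1 - α) * φ s) (Set.Icc 0 t) :=
      (hpow_cont.mul hφcont).continuousOn
    have hint1 : IntervalIntegrable (fun s => (-1) * (1 - α) * (t - s) ^ (1 - α - 1) * φ s)
        volume 0 t := by
      have : (fun s => (-1) * (1 - α) * (t - s) ^ (1 - α - 1) * φ s)
          = fun s => (g s * φ s) * ((-1) * (1 - α)) := by
        funext s
        have : (1:ℝ) - α - 1 = -α := by ring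
        rw [this]; ring
      rw [this]
      exact hI1.mul_const _
    have hint2 : IntervalIntegrable (fun s => (t - s) ^ (1 - α) * φ' s) volume 0 t :=
      ((hpow_cont.mul hcont).continuousOn).intervalIntegrable
    have hftc := intervalIntegral.integral_eq_sub_of_hasDerivAt_of_le (le_of_lt ht0)
      hcontF hF (hint1.add hint2)
    rw [intervalIntegral.integral_add hint1 hint2] at hftc
    have e1 : (∫ s in (0:ℝ)..t, (-1) * (1 - α) * (t - s) ^ (1 - α - 1) * φ s)
        = -(1 - α) * I₁ := by
      have h : ∀ s, (-1) * (1 - α) * (t - s) ^ (1 - α - 1) * φ s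
          = (-(1 - α)) * (g s * φ s) := by
        intro s
        have h2 : (1:ℝ) - α - 1 = -α := by ring
        rw [h2]; simp only [hgdef]; ring
      simp only [h]
      rw [intervalIntegral.integral_const_mul]
    have e2 : (∫ s in (0:ℝ)..t, (t - s) ^ (1 - α) * φ' s) = t * I₂ - I₃ := by
      have h : ∀ s ∈ Set.uIcc (0:ℝ) t, (t - s) ^ (1 - α) * φ' s
          = t * (g s * φ' s) - g s * (s * φ' s) := by
        intro s hs
        rw [Set.uIcc_of_le (le_of_lt ht0)] at hs
        rcases eq_or_lt_of_le hs.2 with h | h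
        · subst h
          simp only [hgdef, sub_self]
          rw [Real.zero_rpow (by linarith), Real.zero_rpow (by intro h; nlinarith)]
          ring
        · have hpos : 0 < t - s := by linarith
          have : (1:ℝ) - α = 1 + (-α) := by ring
          rw [this, Real.rpow_add hpos, Real.rpow_one]
          simp only [hgdef]; ring
      rw [intervalIntegral.integral_congr fun s hs => h s hs,
        intervalIntegral.integral_sub ((hI2.const_mul t)) hI3,
        intervalIntegral.integral_const_mul]
    rw [e1, e2] at hftc
    have hFt : (t - t) ^ (1 - α) * φ t = 0 := by
      simp [Real.zero_rpow (by linarith : (1:ℝ) - α ≠ 0)]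
    have hF0 : (t - 0) ^ (1 - α) * φ 0 = t ^ (1 - α) * φ 0 := by norm_num
    rw [hFt, hF0] at hftc
    linarith
  -- rewrite the goal
  have hw : ∀ x : ℝ, w (1 - α) x = x ^ (-α) / c := by
    intro x
    have : (1:ℝ) - α - 1 = -α := by ring
    rw [w, this, hc]
  have hgoal1 : (∫ s in (0:ℝ)..t, w (1 - α) (t - s) * (φ s + s * φ' s))
      = c⁻¹ * (I₁ + I₃) := by
    have h : ∀ s, w (1 - α) (t - s) * (φ s + s * φ' s)
        = c⁻¹ * (g s * φ s + g s * (s * φ' s)) := by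
      intro s; rw [hw]; simp only [hgdef]; field_simp
    simp only [h]
    rw [intervalIntegral.integral_const_mul, intervalIntegral.integral_add hI1 hI3]
  have hgoal2 : (∫ s in (0:ℝ)..t, w (1 - α) (t - s) * φ' s) = c⁻¹ * I₂ := by
    have h : ∀ s, w (1 - α) (t - s) * φ' s = c⁻¹ * (g s * φ' s) := by
      intro s; rw [hw]; simp only [hgdef]; field_simp
    simp only [h]
    rw [intervalIntegral.integral_const_mul]
  have hgoal3 : (∫ s in (0:ℝ)..t, w (1 - α) (t - s) * φ s) = c⁻¹ * I₁ := by
    have h : ∀ s, w (1 - α) (t - s) * φ s = c⁻¹ * (g s * φ s) := by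
      intro s; rw [hw]; simp only [hgdef]; field_simp
    simp only [h]
    rw [intervalIntegral.integral_const_mul]
  rw [hgoal1, hgoal2, hgoal3, hw]
  have htpow : t ^ (1 - α) = t * t ^ (-α) := by
    have : (1:ℝ) - α = 1 + (-α) := by ring
    rw [this, Real.rpow_add ht0, Real.rpow_one]
  rw [htpow] at key
  have hcne : c ≠ 0 := ne_of_gt hcpos
  field_simp
  nlinarith [key]
end

section
/- Positivity of the fractional integral: for 0 < α < 1 and any piecewise continuous φ : [0,T] → H, where H is a real Hilbert space, one has ∫_0^T ⟨I^α φ(t), φ(t)⟩ dt ≥ 0, where I^α φ(t) = ∫_0^t ω_α(t−s) φ(s) ds. -/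
open scoped RealInnerProductSpace
open MeasureTheory Set

lemma ker_integrable {α : ℝ} (h1 : α < 1) {u : ℝ} (hu : 0 < u) :
    IntegrableOn (fun l : ℝ => l ^ (-α) * Real.exp (-(l * u))) (Ioi 0) := by
  have h := integrableOn_rpow_mul_exp_neg_mul_rpow (p := 1) (s := -α) (b := u)
    (by linarith) one_pos hu
  simpa [Real.rpow_one, mul_comm] using h

lemma ker_int {α : ℝ} (h1 : α < 1) {u : ℝ} (hu : 0 < u) :
    ∫ l in Ioi (0:ℝ), l ^ (-α) * Real.exp (-(l * u))
      = Real.Gamma (1 - α) * u ^ (α - 1) := by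
  have h := Real.integral_rpow_mul_exp_neg_mul_Ioi (a := 1 - α) (r := u) (by linarith) hu
  rw [show (1 - α - 1 : ℝ) = -α by ring] at h
  rw [one_div, Real.inv_rpow hu.le, ← Real.rpow_neg hu.le,
    show -(1 - α) = α - 1 by ring, mul_comm] at h
  simpa [mul_comm] using h

lemma w_rep {α : ℝ} (h0 : 0 < α) (h1 : α < 1) {u : ℝ} (hu : 0 < u) :
    w α u = (Real.Gamma α * Real.Gamma (1 - α))⁻¹
      * ∫ l in Ioi (0:ℝ), l ^ (-α) * Real.exp (-(l * u)) := by
  rw [ker_int h1 hu, w]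
  have hga : Real.Gamma α ≠ 0 := (Real.Gamma_pos_of_pos h0).ne'
  have hgb : Real.Gamma (1 - α) ≠ 0 := (Real.Gamma_pos_of_pos (by linarith)).ne'
  field_simp

/-- exact value of ∫_{(0,t)} e^{-l(t-s)} ds -/
lemma exp_int_eq {l : ℝ} (hl : 0 < l) {t : ℝ} (ht : 0 ≤ t) :
    ∫ s in Ioo (0:ℝ) t, Real.exp (-(l * (t - s))) = (1 - Real.exp (-(l * t))) / l := by
  rw [← integral_Ioc_eq_integral_Ioo, ← intervalIntegral.integral_of_le ht,
    intervalIntegral.integral_comp_sub_left (fun u => Real.exp (-(l * u))) t,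
    sub_self, sub_zero]
  have hderiv : ∀ u ∈ uIcc (0:ℝ) t,
      HasDerivAt (fun u : ℝ => -(l⁻¹) * Real.exp (-(l * u))) (Real.exp (-(l * u))) u := by
    intro u _
    have h1 : HasDerivAt (fun u : ℝ => -(l * u)) (-l) u := by
      simpa using ((hasDerivAt_id u).const_mul (-l))
    have := (h1.exp).const_mul (-(l⁻¹))
    refine this.congr_deriv (Eq.symm ?_)
    field_simp
  rw [intervalIntegral.integral_eq_sub_of_hasDerivAt hderiv
    ((Real.continuous_exp.comp (continuous_const.mul continuous_id).neg).intervalIntegrable _ _)]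
  rw [mul_zero, neg_zero, Real.exp_zero]
  field_simp
  ring

lemma exp_int_le {l : ℝ} (hl : 0 < l) {t T : ℝ} (ht : 0 < t) (htT : t ≤ T) :
    ∫ s in Ioo (0:ℝ) t, Real.exp (-(l * (t - s))) ≤ min T l⁻¹ := by
  apply le_min
  · calc ∫ s in Ioo (0:ℝ) t, Real.exp (-(l * (t - s)))
        ≤ ∫ _ in Ioo (0:ℝ) t, (1:ℝ) := by
          apply integral_mono_of_nonneg (ae_of_all _ fun s => (Real.exp_nonneg _))
            (integrableOn_const (by simp [Real.volume_Ioo]))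
          filter_upwards [ae_restrict_mem measurableSet_Ioo] with s hs
          exact Real.exp_le_one_iff.2 (by nlinarith [hs.2])
      _ = t := by simp [Real.volume_Ioo]; exact ht.le
      _ ≤ T := htT
  · rw [exp_int_eq hl ht.le]
    rw [div_le_iff₀ hl, inv_mul_cancel₀ hl.ne']
    nlinarith [Real.exp_nonneg (-(l * t))]

lemma exp_quad_nonneg {H : Type*} [NormedAddCommGroup H] [InnerProductSpace ℝ H]
    [CompleteSpace H] (T l : ℝ) (hT : 0 < T) (hl : 0 ≤ l)
    (φ : ℝ → H) (hφ : Continuous φ) :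
    0 ≤ ∫ t in Ioc (0:ℝ) T, ∫ s in Ioo (0:ℝ) t, Real.exp (-(l * (t - s))) * ⟪φ s, φ t⟫ := by
  set q : ℝ → H := fun s => Real.exp (l * s) • φ s with hq_def
  have hqcont : Continuous q := ((Real.continuous_exp.comp (continuous_const.mul continuous_id)).smul hφ)
  set y : ℝ → H := fun t => ∫ s in (0:ℝ)..t, q s with hy_def
  have hy : ∀ t, HasDerivAt y (q t) t := fun t =>
    intervalIntegral.integral_hasDerivAt_right (hqcont.intervalIntegrable _ _)
      (hqcont.stronglyMeasurableAtFilter _ _) hqcont.continuousAt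
  have hycont : Continuous y := continuous_iff_continuousAt.2 fun t => (hy t).continuousAt
  set d : ℝ → ℝ := fun t => Real.exp (-(l * t)) * ⟪y t, φ t⟫ with hd_def
  set g : ℝ → ℝ := fun t => ⟪y t, y t⟫ with hg_def
  set h : ℝ → ℝ := fun t => Real.exp (-(2 * l * t)) * g t with hh_def
  have hdc : Continuous d :=
    (Real.continuous_exp.comp (continuous_const.mul continuous_id).neg).mul (hycont.inner hφ)
  have hgc : Continuous g := hycont.inner hycont
  have hhc : Continuous h :=
    (Real.continuous_exp.comp (continuous_const.mul continuous_id).neg).mul hgc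
  -- derivative of h
  have hh : ∀ t, HasDerivAt h (2 * d t - 2 * l * h t) t := by
    intro t
    have he : HasDerivAt (fun t : ℝ => Real.exp (-(2 * l * t)))
        (Real.exp (-(2 * l * t)) * -(2 * l)) t := by
      have : HasDerivAt (fun t : ℝ => -(2 * l * t)) (-(2 * l)) t := by
        simpa using ((hasDerivAt_id t).const_mul (-(2 * l)))
      exact this.exp
    have hg' : HasDerivAt g (⟪y t, q t⟫ + ⟪q t, y t⟫) t := (hy t).inner ℝ (hy t)
    have := he.mul hg'
    refine this.congr_deriv (Eq.symm ?_)
    have e1 : ⟪y t, q t⟫ = Real.exp (l * t) * ⟪y t, φ t⟫ := real_inner_smul_right _ _ _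
    have e2 : ⟪q t, y t⟫ = Real.exp (l * t) * ⟪y t, φ t⟫ := by
      rw [real_inner_comm]; exact real_inner_smul_right _ _ _
    have e3 : Real.exp (-(2 * l * t)) * Real.exp (l * t) = Real.exp (-(l * t)) := by
      rw [← Real.exp_add]; ring_nf
    simp only [hd_def, hh_def, e1, e2]
    calc 2 * (Real.exp (-(l * t)) * ⟪y t, φ t⟫) - 2 * l * (Real.exp (-(2 * l * t)) * g t)
        = 2 * ((Real.exp (-(2 * l * t)) * Real.exp (l * t)) * ⟪y t, φ t⟫)
            - 2 * l * (Real.exp (-(2 * l * t)) * g t) := by rw [e3]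
      _ = Real.exp (-(2 * l * t)) * -(2 * l) * g t
            + Real.exp (-(2 * l * t)) * (Real.exp (l * t) * ⟪y t, φ t⟫
              + Real.exp (l * t) * ⟪y t, φ t⟫) := by ring
  -- the inner integral equals d t for 0 < t
  have key : ∀ t ∈ Ioc (0:ℝ) T,
      (∫ s in Ioo (0:ℝ) t, Real.exp (-(l * (t - s))) * ⟪φ s, φ t⟫) = d t := by
    intro t ht
    have ht0 : (0:ℝ) ≤ t := ht.1.le
    have hint : IntegrableOn q (Ioc 0 t) := hqcont.integrableOn_Ioc
    have : (∫ s in Ioo (0:ℝ) t, Real.exp (-(l * (t - s))) * ⟪φ s, φ t⟫)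
        = ∫ s in Ioc (0:ℝ) t, Real.exp (-(l * t)) * (Real.exp (l * s) * ⟪φ s, φ t⟫) := by
      rw [← integral_Ioc_eq_integral_Ioo]
      refine setIntegral_congr_fun measurableSet_Ioc fun s _ => ?_
      rw [show -(l * (t - s)) = -(l * t) + l * s from by ring, Real.exp_add, mul_assoc]
    rw [this, integral_const_mul, hd_def]
    congr 1
    have hyt : y t = ∫ s in Ioc (0:ℝ) t, q s := intervalIntegral.integral_of_le ht0
    rw [real_inner_comm (φ t) (y t), hyt, ← integral_inner hint]
    refine setIntegral_congr_fun measurableSet_Ioc fun s _ => ?_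
    simp only [hq_def, inner_smul_right]
    rw [real_inner_comm (φ t) (φ s)]
  rw [setIntegral_congr_fun measurableSet_Ioc key,
    ← intervalIntegral.integral_of_le hT.le]
  -- FTC
  have hftc : ∫ t in (0:ℝ)..T, (2 * d t - 2 * l * h t) = h T - h 0 :=
    intervalIntegral.integral_eq_sub_of_hasDerivAt (fun t _ => hh t)
      ((((continuous_const.mul hdc)).sub (continuous_const.mul hhc)).intervalIntegrable _ _)
  have hd_eq : ∀ t, d t = (2 * d t - 2 * l * h t) / 2 + l * h t := fun t => by ring
  have hsplit : ∫ t in (0:ℝ)..T, d t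
      = (∫ t in (0:ℝ)..T, (2 * d t - 2 * l * h t)) / 2 + l * ∫ t in (0:ℝ)..T, h t := by
    rw [← intervalIntegral.integral_div, ← intervalIntegral.integral_const_mul,
      ← intervalIntegral.integral_add (f := fun t => (2 * d t - 2 * l * h t) / 2) (g := fun t => l * h t)
        (((((continuous_const.mul hdc)).sub (continuous_const.mul hhc)).div_const 2).intervalIntegrable _ _)
        ((continuous_const.mul hhc).intervalIntegrable _ _)]
    exact intervalIntegral.integral_congr fun t _ => hd_eq t
  have hy0 : y 0 = 0 := intervalIntegral.integral_same
  have hh0 : h 0 = 0 := by simp [hh_def, hg_def, hy0]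
  have hhnn : ∀ t, 0 ≤ h t :=
    fun t => mul_nonneg (Real.exp_nonneg _) real_inner_self_nonneg
  have hint_h : 0 ≤ ∫ t in (0:ℝ)..T, h t :=
    intervalIntegral.integral_nonneg hT.le fun t _ => hhnn t
  rw [hsplit, hftc, hh0, sub_zero]
  have := hhnn T
  positivity


set_option maxHeartbeats 1600000 in
theorem fracInt_positivity {H : Type*} [NormedAddCommGroup H] [InnerProductSpace ℝ H]
    [CompleteSpace H] (T α : ℝ) (hT : 0 < T) (h0 : 0 < α) (h1 : α < 1)
    (φ : ℝ → H) (hφ : Continuous φ) :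
    0 ≤ ∫ t in (0:ℝ)..T, ⟪∫ s in (0:ℝ)..t, w α (t - s) • φ s, φ t⟫ := by
  -- bound for φ on [0,T]
  obtain ⟨M, hM⟩ := (isCompact_Icc : IsCompact (Icc (0:ℝ) T)).exists_bound_of_continuousOn
    hφ.continuousOn
  have hM0 : 0 ≤ M := le_trans (norm_nonneg _) (hM 0 ⟨le_rfl, hT.le⟩)
  set B : ℝ := M * M with hB_def
  have hB0 : 0 ≤ B := mul_nonneg hM0 hM0
  have hψB : ∀ t ∈ Icc (0:ℝ) T, ∀ s ∈ Icc (0:ℝ) T, |⟪φ s, φ t⟫| ≤ B := by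
    intro t ht s hs
    calc |⟪φ s, φ t⟫| ≤ ‖φ s‖ * ‖φ t‖ := abs_real_inner_le_norm _ _
      _ ≤ B := mul_le_mul (hM s hs) (hM t ht) (norm_nonneg _) hM0
  set c : ℝ := (Real.Gamma α * Real.Gamma (1 - α))⁻¹ with hc_def
  have hc0 : 0 < c := by
    rw [hc_def]
    exact inv_pos.2 (mul_pos (Real.Gamma_pos_of_pos h0)
      (Real.Gamma_pos_of_pos (by linarith)))
  -- measurable global version of G
  set K : (ℝ × ℝ) × ℝ → ℝ := fun q =>
    if 0 < q.2 ∧ q.2 < q.1.1 then Real.exp (-(q.1.2 * (q.1.1 - q.2))) * ⟪φ q.2, φ q.1.1⟫ else 0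
    with hK_def
  have hKmeas : Measurable K := by
    apply Measurable.ite
    · exact (measurableSet_lt measurable_const measurable_snd).inter
        (measurableSet_lt measurable_snd measurable_fst.fst)
    · exact ((Real.continuous_exp.comp
        ((continuous_fst.snd.mul (continuous_fst.fst.sub continuous_snd)).neg)).mul
        ((hφ.comp continuous_snd).inner (hφ.comp continuous_fst.fst))).measurable
    · exact measurable_const
  set G : ℝ × ℝ → ℝ := fun p => ∫ s, K (p, s) ∂(volume.restrict (Ioo 0 T)) with hG_def
  have hGmeas : StronglyMeasurable G := hKmeas.stronglyMeasurable.integral_prod_right'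
  have hGeq : ∀ t, 0 < t → t ≤ T → ∀ l : ℝ,
      G (t, l) = ∫ s in Ioo (0:ℝ) t, Real.exp (-(l * (t - s))) * ⟪φ s, φ t⟫ := by
    intro t ht0 htT l
    have h1' : G (t, l) = ∫ s in Ioo (0:ℝ) T,
        (Ioo (0:ℝ) t).indicator (fun s => Real.exp (-(l * (t - s))) * ⟪φ s, φ t⟫) s := by
      rw [hG_def]
      refine setIntegral_congr_fun measurableSet_Ioo fun s _ => ?_
      simp only [hK_def, Set.indicator_apply, Set.mem_Ioo]
    rw [h1', setIntegral_indicator measurableSet_Ioo,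
      Set.inter_eq_self_of_subset_right (Ioo_subset_Ioo le_rfl htT)]
  -- the dominating function
  set D : ℝ → ℝ := fun l => B * (l ^ (-α) * min T l⁻¹) with hD_def
  have hDmeas : Measurable D := by
    rw [hD_def]; fun_prop
  have hD : IntegrableOn D (Ioi 0) := by
    rw [← Ioc_union_Ioi_eq_Ioi (zero_le_one : (0:ℝ) ≤ 1)]
    apply IntegrableOn.union
    · -- on Ioc 0 1 : dominated by B * T * l^(-α)
      have hrpow : IntegrableOn (fun l : ℝ => B * T * l ^ (-α)) (Ioc 0 1) := by
        have hri : IntervalIntegrable (fun l : ℝ => l ^ (-α)) volume 0 1 :=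
          intervalIntegral.intervalIntegrable_rpow' (by linarith)
        exact ((intervalIntegrable_iff_integrableOn_Ioc_of_le zero_le_one).1 hri).const_mul _
      apply Integrable.mono' hrpow (hDmeas.aestronglyMeasurable.restrict)
      filter_upwards [ae_restrict_mem measurableSet_Ioc] with l hl
      have hl0 : 0 < l := hl.1
      have h1 : (0:ℝ) ≤ l ^ (-α) := Real.rpow_nonneg hl0.le _
      have h2 : 0 ≤ min T l⁻¹ := le_min hT.le (inv_pos.2 hl0).le
      rw [hD_def, Real.norm_of_nonneg (by positivity)]
      calc B * (l ^ (-α) * min T l⁻¹) ≤ B * (l ^ (-α) * T) :=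
            mul_le_mul_of_nonneg_left (mul_le_mul_of_nonneg_left (min_le_left _ _) h1) hB0
        _ = B * T * l ^ (-α) := by ring
    · -- on Ioi 1 : dominated by B * l^(-α-1)
      have hrpow : IntegrableOn (fun l : ℝ => B * l ^ (-α - 1)) (Ioi 1) :=
        (integrableOn_Ioi_rpow_of_lt (by linarith) one_pos).const_mul B
      apply Integrable.mono' hrpow (hDmeas.aestronglyMeasurable.restrict)
      filter_upwards [ae_restrict_mem measurableSet_Ioi] with l hl
      have hl0 : (0:ℝ) < l := lt_trans one_pos hl
      have h1 : (0:ℝ) ≤ l ^ (-α) := Real.rpow_nonneg hl0.le _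
      have h2 : 0 ≤ min T l⁻¹ := le_min hT.le (inv_pos.2 hl0).le
      rw [hD_def, Real.norm_of_nonneg (by positivity)]
      calc B * (l ^ (-α) * min T l⁻¹) ≤ B * (l ^ (-α) * l⁻¹) :=
            mul_le_mul_of_nonneg_left (mul_le_mul_of_nonneg_left (min_le_right _ _) h1) hB0
        _ = B * l ^ (-α - 1) := by
            rw [← Real.rpow_neg_one l, ← Real.rpow_add hl0]
            ring_nf
  -- key estimate on G
  have hGbound : ∀ t ∈ Ioc (0:ℝ) T, ∀ l ∈ Ioi (0:ℝ),
      ‖l ^ (-α) * G (t, l)‖ ≤ D l := by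
    intro t ht l hl
    have hl0 : (0:ℝ) < l := hl
    have habs : |G (t, l)| ≤ B * min T l⁻¹ := by
      rw [hGeq t ht.1 ht.2 l, ← Real.norm_eq_abs]
      have hexpint : IntegrableOn (fun s => Real.exp (-(l * (t - s)))) (Ioo 0 t) :=
        ((Real.continuous_exp.comp
          ((continuous_const.mul (continuous_const.sub continuous_id)).neg)).integrableOn_Ioc).mono_set
          Ioo_subset_Ioc_self
      calc ‖∫ s in Ioo (0:ℝ) t, Real.exp (-(l * (t - s))) * ⟪φ s, φ t⟫‖
          ≤ ∫ s in Ioo (0:ℝ) t, ‖Real.exp (-(l * (t - s))) * ⟪φ s, φ t⟫‖ :=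
            norm_integral_le_integral_norm _
        _ ≤ ∫ s in Ioo (0:ℝ) t, Real.exp (-(l * (t - s))) * B := by
            apply integral_mono_of_nonneg (ae_of_all _ fun s => norm_nonneg _)
              (hexpint.mul_const B)
            filter_upwards [ae_restrict_mem measurableSet_Ioo] with s hs
            rw [norm_mul, Real.norm_of_nonneg (Real.exp_nonneg _)]
            apply mul_le_mul_of_nonneg_left _ (Real.exp_nonneg _)
            exact hψB t ⟨ht.1.le, ht.2⟩ s ⟨hs.1.le, hs.2.le.trans ht.2⟩
        _ = (∫ s in Ioo (0:ℝ) t, Real.exp (-(l * (t - s)))) * B := integral_mul_const _ _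
        _ ≤ min T l⁻¹ * B := by
            apply mul_le_mul_of_nonneg_right (exp_int_le hl0 ht.1 ht.2) hB0
        _ = B * min T l⁻¹ := mul_comm _ _
    rw [norm_mul, Real.norm_of_nonneg (Real.rpow_nonneg hl0.le _), hD_def]
    calc l ^ (-α) * ‖G (t, l)‖ ≤ l ^ (-α) * (B * min T l⁻¹) :=
          mul_le_mul_of_nonneg_left habs (Real.rpow_nonneg hl0.le _)
      _ = B * (l ^ (-α) * min T l⁻¹) := by ring
  -- integrability of the w-kernel slices
  have wInt : ∀ t : ℝ, 0 ≤ t → IntegrableOn (fun s => w α (t - s)) (Ioc 0 t) := by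
    intro t ht
    have hri : IntervalIntegrable (fun x : ℝ => x ^ (α - 1)) volume 0 t :=
      intervalIntegral.intervalIntegrable_rpow' (by linarith)
    have h2 := hri.comp_sub_left t
    rw [sub_zero, sub_self] at h2
    have h3 := h2.symm.div_const (Real.Gamma α)
    have h4 := (intervalIntegrable_iff_integrableOn_Ioc_of_le ht).1 h3
    simpa [w] using h4
  have φmem : ∀ t : ℝ, t ≤ T → MemLp φ ⊤ (volume.restrict (Ioc 0 t)) := by
    intro t htT
    refine memLp_top_of_bound hφ.aestronglyMeasurable.restrict M ?_
    filter_upwards [ae_restrict_mem measurableSet_Ioc] with s hs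
    exact hM s ⟨hs.1.le, hs.2.trans htT⟩
  have smulInt : ∀ t ∈ Ioc (0:ℝ) T, IntegrableOn (fun s => w α (t - s) • φ s) (Ioc 0 t) :=
    fun t ht => (wInt t ht.1.le).smul_of_top_left (φmem t ht.2)
  -- Step 1 : rewrite the statement as an iterated set integral of scalar functions
  set J : ℝ → ℝ := fun t => ∫ s in Ioo (0:ℝ) t, w α (t - s) * ⟪φ s, φ t⟫ with hJ_def
  have step1 : (∫ t in (0:ℝ)..T, ⟪∫ s in (0:ℝ)..t, w α (t - s) • φ s, φ t⟫)
      = ∫ t in Ioc (0:ℝ) T, J t := by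
    rw [intervalIntegral.integral_of_le hT.le]
    refine setIntegral_congr_fun measurableSet_Ioc fun t ht => ?_
    rw [intervalIntegral.integral_of_le ht.1.le,
      real_inner_comm (φ t) _, ← integral_inner (smulInt t ht) (φ t)]
    simp only [hJ_def]
    rw [← integral_Ioc_eq_integral_Ioo]
    refine setIntegral_congr_fun measurableSet_Ioc fun s _ => ?_
    rw [real_inner_smul_right, real_inner_comm (φ s) (φ t)]
  -- Step 2 : Laplace representation of the kernel + Fubini in (s, l), for fixed t
  have hswap1 : ∀ t ∈ Ioc (0:ℝ) T, J t = c * ∫ l in Ioi (0:ℝ), l ^ (-α) * G (t, l) := by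
    intro t ht
    set F : ℝ → ℝ → ℝ :=
      fun s l => (l ^ (-α) * Real.exp (-(l * (t - s)))) * ⟪φ s, φ t⟫ with hF_def
    have hpt : ∀ s ∈ Ioo (0:ℝ) t, w α (t - s) * ⟪φ s, φ t⟫
        = c * ∫ l in Ioi (0:ℝ), F s l := by
      intro s hs
      simp only [hF_def]
      rw [integral_mul_const, w_rep h0 h1 (sub_pos.2 hs.2), ← hc_def]
      ring
    have hFmeas : AEStronglyMeasurable (Function.uncurry F)
        ((volume.restrict (Ioo 0 t)).prod (volume.restrict (Ioi 0))) := by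
      apply Measurable.aestronglyMeasurable
      have hψc : Continuous fun s : ℝ => (⟪φ s, φ t⟫ : ℝ) := hφ.inner continuous_const
      exact ((measurable_snd.pow measurable_const).mul
        (((measurable_snd.mul (measurable_const.sub measurable_fst)).neg).exp)).mul
        (hψc.measurable.comp measurable_fst)
    have hFint : Integrable (Function.uncurry F)
        ((volume.restrict (Ioo 0 t)).prod (volume.restrict (Ioi 0))) := by
      refine (integrable_prod_iff hFmeas).2 ⟨?_, ?_⟩
      · filter_upwards [ae_restrict_mem measurableSet_Ioo] with s hs
        simp only [Function.uncurry_apply_pair, hF_def]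
        exact (ker_integrable h1 (sub_pos.2 hs.2)).mul_const _
      · have base : IntegrableOn (fun s => (t - s) ^ (α - 1)) (Ioc 0 t) := by
          have hri : IntervalIntegrable (fun x : ℝ => x ^ (α - 1)) volume 0 t :=
            intervalIntegral.intervalIntegrable_rpow' (by linarith)
          have h2 := hri.comp_sub_left t
          rw [sub_zero, sub_self] at h2
          exact (intervalIntegrable_iff_integrableOn_Ioc_of_le ht.1.le).1 h2.symm
        have hcf : IntegrableOn
            (fun s => (Real.Gamma (1 - α) * (t - s) ^ (α - 1)) * |⟪φ s, φ t⟫|) (Ioo 0 t) := by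
          have hbase2 : IntegrableOn (fun s => Real.Gamma (1 - α) * (t - s) ^ (α - 1))
              (Ioo 0 t) := IntegrableOn.mono_set (base.const_mul _) Ioo_subset_Ioc_self
          have hmem : MemLp (fun s => |⟪φ s, φ t⟫|) ⊤ (volume.restrict (Ioo 0 t)) := by
            refine memLp_top_of_bound
              ((hφ.inner (continuous_const : Continuous fun _ : ℝ => φ t)).abs.aestronglyMeasurable.restrict) B ?_
            filter_upwards [ae_restrict_mem measurableSet_Ioo] with s hs
            rw [Real.norm_eq_abs, abs_abs]
            exact hψB t ⟨ht.1.le, ht.2⟩ s ⟨hs.1.le, (hs.2.le.trans ht.2)⟩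
          exact hbase2.smul_of_top_left hmem
        refine hcf.congr ?_
        filter_upwards [ae_restrict_mem measurableSet_Ioo] with s hs
        simp only [Function.uncurry_apply_pair]
        have hu : (0:ℝ) < t - s := sub_pos.2 hs.2
        have : ∫ l in Ioi (0:ℝ), ‖F s l‖
            = ∫ l in Ioi (0:ℝ), (l ^ (-α) * Real.exp (-(l * (t - s)))) * |⟪φ s, φ t⟫| := by
          refine setIntegral_congr_fun measurableSet_Ioi fun l hl => ?_
          simp only [hF_def]
          rw [norm_mul, Real.norm_eq_abs, Real.norm_eq_abs,
            abs_of_nonneg (mul_nonneg (Real.rpow_nonneg (le_of_lt hl) _) (Real.exp_nonneg _))]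
        rw [this, integral_mul_const, ker_int h1 hu]
    have hs1 := integral_integral_swap hFint
    calc J t = ∫ s in Ioo (0:ℝ) t, c * ∫ l in Ioi (0:ℝ), F s l :=
          setIntegral_congr_fun measurableSet_Ioo hpt
      _ = c * ∫ s in Ioo (0:ℝ) t, ∫ l in Ioi (0:ℝ), F s l := integral_const_mul _ _
      _ = c * ∫ l in Ioi (0:ℝ), ∫ s in Ioo (0:ℝ) t, F s l := by rw [hs1]
      _ = c * ∫ l in Ioi (0:ℝ), l ^ (-α) * G (t, l) := by
          congr 1
          refine setIntegral_congr_fun measurableSet_Ioi fun l _ => ?_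
          rw [hGeq t ht.1 ht.2 l, ← integral_const_mul]
          refine setIntegral_congr_fun measurableSet_Ioo fun s _ => ?_
          simp only [hF_def]
          ring
  -- Step 3 : Fubini in (t, l)
  have hsm2 : StronglyMeasurable (fun p : ℝ × ℝ => p.2 ^ (-α) * G p) :=
    ((measurable_snd.pow measurable_const).stronglyMeasurable).mul hGmeas
  have hint2 : Integrable (fun p : ℝ × ℝ => p.2 ^ (-α) * G p)
      ((volume.restrict (Ioc 0 T)).prod (volume.restrict (Ioi 0))) := by
    refine (integrable_prod_iff hsm2.aestronglyMeasurable).2 ⟨?_, ?_⟩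
    · filter_upwards [ae_restrict_mem measurableSet_Ioc] with t ht
      refine Integrable.mono' hD ?_ ?_
      · exact (((measurable_id.pow measurable_const).stronglyMeasurable).mul
          (hGmeas.comp_measurable (measurable_const.prodMk measurable_id))).aestronglyMeasurable
      · filter_upwards [ae_restrict_mem measurableSet_Ioi] with l hl
        exact hGbound t ht l hl
    · refine Integrable.mono' (integrable_const (∫ l in Ioi (0:ℝ), D l)) ?_ ?_
      · exact (hsm2.norm.integral_prod_right').aestronglyMeasurable
      · filter_upwards [ae_restrict_mem measurableSet_Ioc] with t ht
        rw [Real.norm_of_nonneg (integral_nonneg fun l => norm_nonneg _)]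
        refine integral_mono_of_nonneg (ae_of_all _ fun l => norm_nonneg _) hD ?_
        filter_upwards [ae_restrict_mem measurableSet_Ioi] with l hl
        exact hGbound t ht l hl
  have hs2 := integral_integral_swap (f := fun t l => l ^ (-α) * G (t, l)) hint2
  -- Conclusion
  rw [step1, setIntegral_congr_fun measurableSet_Ioc hswap1, integral_const_mul]
  have : (∫ t in Ioc (0:ℝ) T, ∫ l in Ioi (0:ℝ), l ^ (-α) * G (t, l))
      = ∫ l in Ioi (0:ℝ), ∫ t in Ioc (0:ℝ) T, l ^ (-α) * G (t, l) := hs2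
  rw [this]
  apply mul_nonneg hc0.le
  apply setIntegral_nonneg measurableSet_Ioi
  intro l hl
  rw [integral_const_mul]
  apply mul_nonneg (Real.rpow_nonneg (le_of_lt hl) _)
  rw [setIntegral_congr_fun measurableSet_Ioc (fun t ht => hGeq t ht.1 ht.2 l)]
  exact exp_quad_nonneg T l hT (le_of_lt hl) φ hφ
end

section
/- Pointwise bound via fractional energy: if 0 < α < 1 and φ : [0,T] → H is continuously differentiable with φ(0) = 0, then for t ∈ (0,T], ‖φ(t)‖² ≤ (t^α/α²) ∫_0^t ⟨I^{1−α} φ'(s), φ'(s)⟩ ds. -/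
open scoped RealInnerProductSpace
open MeasureTheory Real Set intervalIntegral


lemma gamma_scaled {a r : ℝ} (ha : 0 < a) (hr : 0 < r) :
    ∫ x in Ioi (0:ℝ), x ^ (a-1) * Real.exp (-(r*x)) = r ^ (-a) * Real.Gamma a := by
  rw [Real.integral_rpow_mul_exp_neg_mul_Ioi ha hr, one_div, ← Real.rpow_neg_one,
    ← Real.rpow_mul hr.le, neg_one_mul]

lemma intble_scaled {a r : ℝ} (ha : 0 < a) (hr : 0 < r) :
    IntegrableOn (fun x : ℝ => x ^ (a-1) * Real.exp (-(r*x))) (Ioi 0) := by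
  have := integrableOn_rpow_mul_exp_neg_mul_rpow (p := 1) (s := a-1) (b := r) (by linarith) one_pos hr
  refine this.congr_fun (fun x hx => ?_) measurableSet_Ioi
  beta_reduce
  rw [Real.rpow_one, neg_mul]

lemma beta2 {α t : ℝ} (h0 : 0 < α) (h1 : α < 1) (ht : 0 < t) :
    ∫ l in Ioi (0:ℝ), l ^ (α-1) / (2 + l*t)
      = 2 ^ (α-1) * t ^ (-α) * (Real.Gamma α * Real.Gamma (1-α)) := by
  set F : ℝ → ℝ → ℝ := fun l v => l ^ (α-1) * Real.exp (-((2+l*t)*v)) with hF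
  have hsplit : ∀ l v : ℝ, F l v = Real.exp (-(2*v)) * (l ^ (α-1) * Real.exp (-((t*v)*l))) := by
    intro l v
    rw [hF]; simp only
    rw [show (-((2+l*t)*v)) = (-(2*v)) + (-(t*v*l)) by ring, Real.exp_add]; ring
  have hmeas : AEStronglyMeasurable (Function.uncurry F)
      ((volume.restrict (Ioi (0:ℝ))).prod (volume.restrict (Ioi (0:ℝ)))) := by
    apply Measurable.aestronglyMeasurable
    unfold Function.uncurry
    fun_prop
  have hv : ∀ l ∈ Ioi (0:ℝ), ∫ v in Ioi (0:ℝ), F l v = l ^ (α-1) / (2 + l*t) := by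
    intro l hl
    have hc : 0 < 2 + l*t := by have := mul_pos (mem_Ioi.mp hl) ht; linarith
    rw [hF]
    simp only
    rw [MeasureTheory.integral_const_mul]
    have : ∫ v in Ioi (0:ℝ), Real.exp (-((2+l*t)*v))
        = ∫ v in Ioi (0:ℝ), v ^ ((1:ℝ)-1) * Real.exp (-((2+l*t)*v)) := by
      refine setIntegral_congr_fun measurableSet_Ioi (fun v hv => ?_)
      rw [sub_self, Real.rpow_zero, one_mul]
    rw [this, gamma_scaled one_pos hc, Real.Gamma_one, mul_one, Real.rpow_neg_one,
      div_eq_mul_inv]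
  have hl : ∀ v ∈ Ioi (0:ℝ), ∫ l in Ioi (0:ℝ), F l v
      = Real.exp (-(2*v)) * ((t*v) ^ (-α) * Real.Gamma α) := by
    intro v hv
    have htv : 0 < t*v := mul_pos ht (mem_Ioi.mp hv)
    simp_rw [hsplit]
    rw [MeasureTheory.integral_const_mul, gamma_scaled h0 htv]
  have hFnn : ∀ v : ℝ, ∀ l ∈ Ioi (0:ℝ), 0 ≤ F l v := by
    intro v l hl
    rw [hF]; simp only
    have := Real.rpow_nonneg (le_of_lt (mem_Ioi.mp hl)) (α-1)
    positivity
  set g0 : ℝ → ℝ := fun v => Real.Gamma α * t ^ (-α) * (v ^ ((1-α)-1) * Real.exp (-(2*v)))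
    with hg0def
  have hg0 : IntegrableOn g0 (Ioi (0:ℝ)) :=
    (intble_scaled (by linarith : (0:ℝ) < 1-α) two_pos).const_mul _
  have hg0eq : ∀ v ∈ Ioi (0:ℝ), g0 v = ∫ l in Ioi (0:ℝ), F l v := by
    intro v hv
    rw [hl v hv, hg0def]
    simp only
    rw [Real.mul_rpow ht.le (le_of_lt (mem_Ioi.mp hv))]
    ring_nf
  have hint : Integrable (Function.uncurry F)
      ((volume.restrict (Ioi (0:ℝ))).prod (volume.restrict (Ioi (0:ℝ)))) := by
    rw [MeasureTheory.integrable_prod_iff' hmeas]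
    constructor
    · filter_upwards [self_mem_ae_restrict measurableSet_Ioi] with v hv
      have htv : 0 < t*v := mul_pos ht (mem_Ioi.mp hv)
      have : Integrable (fun l => F l v) (volume.restrict (Ioi (0:ℝ))) := by
        simp_rw [hsplit]
        exact ((intble_scaled h0 htv).const_mul _)
      exact this
    · refine (hg0.congr_fun ?_ measurableSet_Ioi)
      intro v hv
      rw [hg0eq v hv]
      refine setIntegral_congr_fun measurableSet_Ioi (fun l hl' => ?_)
      exact (Real.norm_of_nonneg (hFnn v l hl')).symm
  have hswap := MeasureTheory.integral_integral_swap hint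
  calc ∫ l in Ioi (0:ℝ), l ^ (α-1) / (2 + l*t)
      = ∫ l in Ioi (0:ℝ), ∫ v in Ioi (0:ℝ), F l v := by
        exact (setIntegral_congr_fun measurableSet_Ioi hv).symm
    _ = ∫ v in Ioi (0:ℝ), ∫ l in Ioi (0:ℝ), F l v := hswap
    _ = ∫ v in Ioi (0:ℝ), g0 v := (setIntegral_congr_fun measurableSet_Ioi (fun v hv => (hg0eq v hv).symm))
    _ = Real.Gamma α * t ^ (-α) * (2 ^ (-(1-α)) * Real.Gamma (1-α)) := by
        rw [hg0def, MeasureTheory.integral_const_mul, gamma_scaled (by linarith) two_pos]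
    _ = 2 ^ (α-1) * t ^ (-α) * (Real.Gamma α * Real.Gamma (1-α)) := by
        rw [neg_sub]; ring


lemma intble_master {α : ℝ} (h0 : 0 < α) (h1 : α < 1) :
    IntegrableOn (fun l : ℝ => l ^ (α-1) * min 1 l⁻¹) (Ioi 0) := by
  have hmeas : AEStronglyMeasurable (fun l : ℝ => l ^ (α-1) * min 1 l⁻¹)
      (volume.restrict (Ioi (0:ℝ))) := by
    apply Measurable.aestronglyMeasurable
    fun_prop
  rw [← Ioc_union_Ioi_eq_Ioi (zero_le_one : (0:ℝ) ≤ 1), integrableOn_union]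
  constructor
  · have base : IntegrableOn (fun l : ℝ => l ^ (α-1)) (Ioc 0 1) := by
      have := intervalIntegral.intervalIntegrable_rpow' (a := (0:ℝ)) (b := 1)
        (by linarith : (-1:ℝ) < α-1)
      rwa [intervalIntegrable_iff_integrableOn_Ioc_of_le zero_le_one] at this
    refine base.mono' (hmeas.mono_measure (Measure.restrict_mono Ioc_subset_Ioi_self le_rfl)) ?_
    filter_upwards [self_mem_ae_restrict measurableSet_Ioc] with l hl
    have hl0 : (0:ℝ) < l := hl.1
    have h1' : 0 ≤ l ^ (α-1) := Real.rpow_nonneg hl0.le _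
    have h2 : 0 ≤ min 1 l⁻¹ := le_min zero_le_one (by positivity)
    rw [Real.norm_of_nonneg (mul_nonneg h1' h2)]
    nlinarith [min_le_left (1:ℝ) l⁻¹]
  · have base : IntegrableOn (fun l : ℝ => l ^ (α-2)) (Ioi 1) :=
      integrableOn_Ioi_rpow_of_lt (by linarith) one_pos
    refine base.mono' (hmeas.mono_measure (Measure.restrict_mono (Ioi_subset_Ioi zero_le_one) le_rfl)) ?_
    filter_upwards [self_mem_ae_restrict measurableSet_Ioi] with l hl
    have hl1 : (1:ℝ) < l := hl
    have hl0 : (0:ℝ) < l := by linarith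
    have hmin : min 1 l⁻¹ = l⁻¹ := min_eq_right (by
      rw [inv_le_one_iff₀]; right; exact hl1.le)
    have h1' : 0 ≤ l ^ (α-1) := Real.rpow_nonneg hl0.le _
    rw [hmin, Real.norm_of_nonneg (by positivity)]
    rw [← Real.rpow_neg_one l, ← Real.rpow_add hl0]
    norm_num
    rw [show α - 1 + -1 = α - 2 by ring]

lemma intble_dom {α C : ℝ} (h0 : 0 < α) (h1 : α < 1) {f : ℝ → ℝ}
    (hm : AEStronglyMeasurable f (volume.restrict (Ioi 0)))
    (hb : ∀ l ∈ Ioi (0:ℝ), ‖f l‖ ≤ C * (l ^ (α-1) * min 1 l⁻¹)) :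
    IntegrableOn f (Ioi 0) := by
  refine ((intble_master h0 h1).const_mul C).mono' hm ?_
  filter_upwards [self_mem_ae_restrict measurableSet_Ioi] with l hl
  exact hb l hl

lemma intble_ker {α s : ℝ} (h1 : α < 1) (hs : 0 < s) :
    IntegrableOn (fun r : ℝ => (s - r) ^ (-α)) (Ioo 0 s) := by
  have h := intervalIntegral.intervalIntegrable_rpow' (a := (0:ℝ)) (b := s)
    (by linarith : (-1:ℝ) < -α)
  have h2 := (h.comp_sub_left s).symm
  simp only [sub_self, sub_zero] at h2
  rw [intervalIntegrable_iff_integrableOn_Ioo_of_le hs.le] at h2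
  exact h2


lemma sq_integral_le {f : ℝ → ℝ} (hf : Continuous f) {t : ℝ} (ht : 0 ≤ t) :
    (∫ s in (0:ℝ)..t, f s) ^ 2 ≤ t * ∫ s in (0:ℝ)..t, (f s) ^ 2 := by
  set F : ℝ → ℝ := fun u => ∫ s in (0:ℝ)..u, f s with hFdef
  set F2 : ℝ → ℝ := fun u => ∫ s in (0:ℝ)..u, (f s) ^ 2 with hF2def
  set G : ℝ → ℝ := fun u => (F u) ^ 2 - u * F2 u with hGdef
  have hF : ∀ u : ℝ, HasDerivAt F (f u) u := fun u =>
    intervalIntegral.integral_hasDerivAt_right (hf.intervalIntegrable _ _)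
      hf.aestronglyMeasurable.stronglyMeasurableAtFilter hf.continuousAt
  have hF2 : ∀ u : ℝ, HasDerivAt F2 ((f u) ^ 2) u := fun u =>
    intervalIntegral.integral_hasDerivAt_right ((hf.pow 2).intervalIntegrable _ _)
      (hf.pow 2).aestronglyMeasurable.stronglyMeasurableAtFilter (hf.pow 2).continuousAt
  have hG : ∀ u : ℝ, HasDerivAt G (2 * F u * f u - (F2 u + u * (f u) ^ 2)) u := by
    intro u
    have h1 : HasDerivAt (fun v => (F v) ^ 2) (2 * F u * f u) u := by
      have := (hF u).pow 2
      simpa [Pi.pow_def, mul_comm, mul_assoc, mul_left_comm] using this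
    have h2 : HasDerivAt (fun v => v * F2 v) (F2 u + u * (f u) ^ 2) u := by
      have := (hasDerivAt_id u).mul (hF2 u)
      simpa [Pi.mul_def] using this
    exact h1.sub h2
  have hkey : ∀ u : ℝ, 0 ≤ u → 2 * F u * f u - (F2 u + u * (f u) ^ 2) ≤ 0 := by
    intro u hu
    have hnn : 0 ≤ ∫ s in (0:ℝ)..u, (f s - f u) ^ 2 :=
      intervalIntegral.integral_nonneg hu (fun s _ => sq_nonneg _)
    have hexp : ∫ s in (0:ℝ)..u, (f s - f u) ^ 2
        = F2 u - 2 * f u * F u + u * (f u) ^ 2 := by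
      have : ∀ s : ℝ, (f s - f u) ^ 2 = (f s) ^ 2 - 2 * f u * f s + (f u)^2 := by
        intro s; ring
      rw [intervalIntegral.integral_congr (fun s _ => this s)]
      rw [intervalIntegral.integral_add, intervalIntegral.integral_sub]
      · simp only [intervalIntegral.integral_const_mul, intervalIntegral.integral_const,
          smul_eq_mul, sub_zero]
        try rw [hFdef, hF2def]
        try ring
      · exact (hf.pow 2).intervalIntegrable _ _
      · exact ((continuous_const.mul hf)).intervalIntegrable _ _
      · exact (((hf.pow 2)).sub (continuous_const.mul hf)).intervalIntegrable _ _
      · exact continuous_const.intervalIntegrable _ _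
    nlinarith [hnn, hexp]
  have hanti : AntitoneOn G (Icc 0 t) := by
    apply antitoneOn_of_deriv_nonpos (convex_Icc 0 t)
    · exact (Continuous.continuousOn (by
        have : Differentiable ℝ G := fun u => (hG u).differentiableAt
        exact this.continuous))
    · intro x hx
      exact (hG x).differentiableAt.differentiableWithinAt
    · intro x hx
      rw [interior_Icc] at hx
      rw [(hG x).deriv]
      exact hkey x hx.1.le
  have h0 : G 0 = 0 := by
    simp [hGdef, hFdef, hF2def]
  have := hanti (left_mem_Icc.mpr ht) (right_mem_Icc.mpr ht) ht
  rw [h0] at this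
  have ht2 : (F t)^2 - t * F2 t ≤ 0 := this
  simp only [hFdef, hF2def] at ht2
  linarith

set_option maxHeartbeats 8000000 in
theorem pointwise_bound_via_fracEnergy {H : Type*} [NormedAddCommGroup H]
    [InnerProductSpace ℝ H] [CompleteSpace H]
    (T α : ℝ) (hT : 0 < T) (h0 : 0 < α) (h1 : α < 1)
    (φ φ' : ℝ → H) (hderiv : ∀ s, HasDerivAt φ (φ' s) s) (hcont : Continuous φ')
    (hφ0 : φ 0 = 0) (t : ℝ) (ht : t ∈ Set.Ioc (0:ℝ) T) :
    ‖φ t‖ ^ 2 ≤ (t ^ α / α ^ 2) *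
      ∫ s in (0:ℝ)..t, ⟪∫ r in (0:ℝ)..s, w (1 - α) (s - r) • φ' r, φ' s⟫ := by
  obtain ⟨ht0, htT⟩ := ht
  obtain ⟨M, hM⟩ : ∃ M : ℝ, ∀ x ∈ Icc (0:ℝ) t, ‖φ' x‖ ≤ M :=
    isCompact_Icc.exists_bound_of_continuousOn hcont.continuousOn
  have hM0 : 0 ≤ M := le_trans (norm_nonneg _) (hM 0 ⟨le_rfl, ht0.le⟩)
  have hΓα : 0 < Real.Gamma α := Real.Gamma_pos_of_pos h0
  have hΓ1α : 0 < Real.Gamma (1-α) := Real.Gamma_pos_of_pos (by linarith)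
  set c : ℝ := Real.Gamma α * Real.Gamma (1-α) with hc
  have hcpos : 0 < c := mul_pos hΓα hΓ1α
  set y : ℝ → ℝ → H :=
    fun l s => Real.exp (-(l*s)) • ∫ r in (0:ℝ)..s, Real.exp (l*r) • φ' r with hy
  have hYd : ∀ l s : ℝ,
      HasDerivAt (fun u : ℝ => ∫ r in (0:ℝ)..u, Real.exp (l*r) • φ' r)
        (Real.exp (l*s) • φ' s) s := by
    intro l s
    have hco : Continuous fun r : ℝ => Real.exp (l*r) • φ' r :=
      (Real.continuous_exp.comp (continuous_const.mul continuous_id)).smul hcont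
    exact intervalIntegral.integral_hasDerivAt_right (hco.intervalIntegrable _ _)
      hco.aestronglyMeasurable.stronglyMeasurableAtFilter hco.continuousAt
  have hyd : ∀ l s : ℝ, HasDerivAt (y l) (φ' s - l • y l s) s := by
    intro l s
    have h1 : HasDerivAt (fun u : ℝ => Real.exp (-(l*u))) (-l * Real.exp (-(l*s))) s := by
      have h0' : HasDerivAt (fun u : ℝ => -(l*u)) (-l) s := by
        simpa using (hasDerivAt_id s).const_mul (-l)
      simpa [mul_comm] using h0'.exp
    have h2 := h1.smul (hYd l s)
    simp only [hy]
    convert h2 using 1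
    · rfl
    rw [smul_smul (Real.exp (-(l*s))) (Real.exp (l*s)), ← Real.exp_add, neg_add_cancel,
      Real.exp_zero, one_smul]
    module
  have hycont : Continuous (fun q : ℝ × ℝ => y q.1 q.2) := by
    have hYcont : Continuous (fun q : ℝ × ℝ => ∫ r in (0:ℝ)..q.2, Real.exp (q.1*r) • φ' r) := by
      apply intervalIntegral.continuous_parametric_primitive_of_continuous
        (f := fun (l : ℝ) (r : ℝ) => Real.exp (l*r) • φ' r)
      exact (Real.continuous_exp.comp (continuous_fst.mul continuous_snd)).smul
        (hcont.comp continuous_snd)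
    simp only [hy]
    exact (Real.continuous_exp.comp (continuous_fst.mul continuous_snd).neg).smul hYcont
  have hycont1 : ∀ l : ℝ, Continuous (y l) := by
    intro l
    have h := hycont.comp (f := fun s : ℝ => ((l, s) : ℝ × ℝ))
      (continuous_const.prodMk continuous_id)
    exact h
  have hya : ∀ l s : ℝ, y l s = ∫ r in (0:ℝ)..s, Real.exp (-(l*(s-r))) • φ' r := by
    intro l s
    simp only [hy]
    rw [← intervalIntegral.integral_smul]
    apply intervalIntegral.integral_congr
    intro r hr
    simp only
    rw [smul_smul, ← Real.exp_add, show -(l*s) + l*r = -(l*(s-r)) by ring]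
  have hy0 : ∀ l : ℝ, y l 0 = 0 := by
    intro l
    simp [hy]
  have hphiFTC : φ t = ∫ s in (0:ℝ)..t, φ' s := by
    rw [intervalIntegral.integral_eq_sub_of_hasDerivAt (fun s _ => hderiv s)
      (hcont.intervalIntegrable 0 t), hφ0, sub_zero]
  have hyb : ∀ l ∈ Ioi (0:ℝ), ∀ s ∈ Ioc (0:ℝ) t, ‖y l s‖ ≤ M * min t l⁻¹ := by
    intro l hl s hs
    have hl0 : (0:ℝ) < l := hl
    have hs0 : (0:ℝ) ≤ s := hs.1.le
    rw [hya]
    have hbound1 : ‖∫ r in (0:ℝ)..s, Real.exp (-(l*(s-r))) • φ' r‖ ≤ M * t := by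
      have h := intervalIntegral.norm_integral_le_of_norm_le_const
        (C := M) (a := (0:ℝ)) (b := s) (f := fun r => Real.exp (-(l*(s-r))) • φ' r) ?_
      · calc ‖∫ r in (0:ℝ)..s, Real.exp (-(l*(s-r))) • φ' r‖ ≤ M * |s - 0| := h
          _ ≤ M * t := by
            rw [sub_zero, abs_of_nonneg hs0]
            exact mul_le_mul_of_nonneg_left hs.2 hM0
      · intro x hx
        rw [Set.uIoc_of_le hs0] at hx
        rw [norm_smul, Real.norm_eq_abs, abs_of_pos (Real.exp_pos _)]
        have hx1 : 0 < x := hx.1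
        have hx2 : x ≤ s := hx.2
        have he : Real.exp (-(l*(s-x))) ≤ 1 := by
          rw [Real.exp_le_one_iff]
          nlinarith
        have hp : ‖φ' x‖ ≤ M := hM x ⟨hx1.le, le_trans hx2 hs.2⟩
        nlinarith [norm_nonneg (φ' x), (Real.exp_pos (-(l*(s-x)))).le]
    have hbound2 : ‖∫ r in (0:ℝ)..s, Real.exp (-(l*(s-r))) • φ' r‖ ≤ M * l⁻¹ := by
      have hcontker : Continuous fun r : ℝ => Real.exp (-(l*(s-r))) :=
        Real.continuous_exp.comp ((continuous_const.mul (continuous_const.sub continuous_id)).neg)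
      have hle : ‖∫ r in (0:ℝ)..s, Real.exp (-(l*(s-r))) • φ' r‖
          ≤ ∫ r in (0:ℝ)..s, Real.exp (-(l*(s-r))) * M := by
        refine le_trans (intervalIntegral.norm_integral_le_integral_norm hs0) ?_
        refine intervalIntegral.integral_mono_on hs0 ?_ ?_ ?_
        · exact ((hcontker.smul hcont).norm).intervalIntegrable _ _
        · exact (hcontker.mul continuous_const).intervalIntegrable _ _
        · intro x hx
          rw [norm_smul, Real.norm_eq_abs, abs_of_pos (Real.exp_pos _)]
          exact mul_le_mul_of_nonneg_left (hM x ⟨hx.1, le_trans hx.2 hs.2⟩)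
            (Real.exp_pos _).le
      have hval : ∫ r in (0:ℝ)..s, Real.exp (-(l*(s-r))) = (1 - Real.exp (-(l*s)))/l := by
        have hcs := intervalIntegral.integral_comp_sub_left
          (a := (0:ℝ)) (b := s) (fun u => Real.exp (-(l*u))) s
        simp only [sub_self, sub_zero] at hcs
        rw [hcs]
        have hder : ∀ u : ℝ, HasDerivAt (fun u : ℝ => -(Real.exp (-(l*u))/l))
            (Real.exp (-(l*u))) u := by
          intro u
          have h1 : HasDerivAt (fun u : ℝ => -(l*u)) (-l) u := by
            simpa using (hasDerivAt_id u).const_mul (-l)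
          have h3 := ((h1.exp).div_const l).neg
          convert h3 using 1
          iterate 3 · rfl
          field_simp
        rw [intervalIntegral.integral_eq_sub_of_hasDerivAt (fun u _ => hder u)
          ((Real.continuous_exp.comp ((continuous_const.mul continuous_id).neg)).intervalIntegrable _ _)]
        simp only [mul_zero, neg_zero, Real.exp_zero]
        ring
      rw [intervalIntegral.integral_mul_const, hval] at hle
      have h2 : (1 - Real.exp (-(l*s)))/l ≤ l⁻¹ := by
        rw [div_le_iff₀ hl0, inv_mul_cancel₀ (ne_of_gt hl0)]
        nlinarith [(Real.exp_pos (-(l*s))).le]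
      have := mul_le_mul_of_nonneg_right h2 hM0
      calc ‖∫ r in (0:ℝ)..s, Real.exp (-(l*(s-r))) • φ' r‖
          ≤ (1 - Real.exp (-(l*s)))/l * M := hle
        _ ≤ l⁻¹ * M := this
        _ = M * l⁻¹ := mul_comm _ _
    rcases min_cases t l⁻¹ with ⟨hmin, _⟩ | ⟨hmin, _⟩ <;> rw [hmin]
    · exact hbound1
    · exact hbound2
  have hrep : ∀ l : ℝ, φ t = y l t + l • ∫ s in (0:ℝ)..t, y l s := by
    intro l
    have hFTCy : ∫ s in (0:ℝ)..t, (φ' s - l • y l s) = y l t - y l 0 :=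
      intervalIntegral.integral_eq_sub_of_hasDerivAt (fun s _ => hyd l s)
        ((hcont.sub ((hycont1 l).const_smul l)).intervalIntegrable _ _)
    rw [intervalIntegral.integral_sub (g := fun s => l • y l s) (hcont.intervalIntegrable _ _)
      (((hycont1 l).const_smul l).intervalIntegrable _ _),
      intervalIntegral.integral_smul, hy0 l, sub_zero] at hFTCy
    rw [hphiFTC, ← hFTCy]
    abel
  have hElb : ∀ l ∈ Ioi (0:ℝ),
      ‖φ t‖ ^ 2 / (2 + l*t) ≤ ∫ s in Ioc (0:ℝ) t, ⟪φ' s, y l s⟫ := by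
    intro l hl
    have hl0 : (0:ℝ) < l := hl
    have hNd : ∀ s : ℝ, HasDerivAt (fun u => (⟪y l u, y l u⟫ : ℝ))
        (2*⟪φ' s, y l s⟫ - 2*l*⟪y l s, y l s⟫) s := by
      intro s
      have h := (hyd l s).inner ℝ (hyd l s)
      convert h using 1
      iterate 2 · rfl
      simp only [inner_sub_left, inner_sub_right, real_inner_smul_left, real_inner_smul_right]
      rw [real_inner_comm (y l s) (φ' s)]
      ring
    have hcA : Continuous fun s : ℝ => (⟪φ' s, y l s⟫ : ℝ) := hcont.inner (hycont1 l)
    have hcB : Continuous fun s : ℝ => (⟪y l s, y l s⟫ : ℝ) := (hycont1 l).inner (hycont1 l)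
    have hci : Continuous fun s : ℝ => 2*(⟪φ' s, y l s⟫ : ℝ) - 2*l*⟪y l s, y l s⟫ :=
      (continuous_const.mul hcA).sub (continuous_const.mul hcB)
    have hEid : ∫ s in (0:ℝ)..t, (2*(⟪φ' s, y l s⟫ : ℝ) - 2*l*⟪y l s, y l s⟫)
        = ⟪y l t, y l t⟫ - ⟪y l 0, y l 0⟫ :=
      intervalIntegral.integral_eq_sub_of_hasDerivAt (fun s _ => hNd s)
        (hci.intervalIntegrable _ _)
    rw [hy0 l, inner_zero_left, sub_zero,
      intervalIntegral.integral_sub (f := fun s => 2*(⟪φ' s, y l s⟫ : ℝ)) (g := fun s => 2*l*⟪y l s, y l s⟫) ((continuous_const.mul hcA).intervalIntegrable _ _)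
        ((continuous_const.mul hcB).intervalIntegrable _ _),
      intervalIntegral.integral_const_mul, intervalIntegral.integral_const_mul] at hEid
    set A : ℝ := ∫ s in (0:ℝ)..t, (⟪φ' s, y l s⟫ : ℝ) with hAdef
    set B : ℝ := ∫ s in (0:ℝ)..t, (⟪y l s, y l s⟫ : ℝ) with hBdef
    have hBnn : 0 ≤ B :=
      intervalIntegral.integral_nonneg ht0.le (fun s _ => real_inner_self_nonneg)
    have hbb2 : ‖∫ s in (0:ℝ)..t, y l s‖^2 ≤ t * B := by
      have h1 : ‖∫ s in (0:ℝ)..t, y l s‖ ≤ ∫ s in (0:ℝ)..t, ‖y l s‖ :=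
        intervalIntegral.norm_integral_le_integral_norm ht0.le
      have h2 : (∫ s in (0:ℝ)..t, ‖y l s‖)^2 ≤ t * ∫ s in (0:ℝ)..t, ‖y l s‖^2 :=
        sq_integral_le (hycont1 l).norm ht0.le
      have h3 : ∫ s in (0:ℝ)..t, ‖y l s‖^2 = B :=
        intervalIntegral.integral_congr (fun s _ => (real_inner_self_eq_norm_sq (y l s)).symm)
      calc ‖∫ s in (0:ℝ)..t, y l s‖^2 ≤ (∫ s in (0:ℝ)..t, ‖y l s‖)^2 :=
            pow_le_pow_left₀ (norm_nonneg _) h1 2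
        _ ≤ t * ∫ s in (0:ℝ)..t, ‖y l s‖^2 := h2
        _ = t * B := by rw [h3]
    have hphile : ‖φ t‖ ≤ ‖y l t‖ + l * ‖∫ s in (0:ℝ)..t, y l s‖ := by
      calc ‖φ t‖ = ‖y l t + l • ∫ s in (0:ℝ)..t, y l s‖ := by rw [← hrep l]
        _ ≤ ‖y l t‖ + ‖l • ∫ s in (0:ℝ)..t, y l s‖ := norm_add_le _ _
        _ = ‖y l t‖ + l * ‖∫ s in (0:ℝ)..t, y l s‖ := by
            rw [norm_smul_of_nonneg hl0.le]
    have halt : (⟪y l t, y l t⟫ : ℝ) = ‖y l t‖^2 := real_inner_self_eq_norm_sq _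
    have hF2 : ‖φ t‖^2 ≤ (‖y l t‖ + l * ‖∫ s in (0:ℝ)..t, y l s‖)^2 :=
      pow_le_pow_left₀ (norm_nonneg _) hphile 2
    rw [← intervalIntegral.integral_of_le ht0.le]
    rw [div_le_iff₀ (by positivity)]
    show ‖φ t‖ ^ 2 ≤ A * (2 + l*t)
    set a : ℝ := ‖y l t‖
    set b : ℝ := ‖∫ s in (0:ℝ)..t, y l s‖
    have h4 : 0 ≤ l*(t*a - 2*b)^2 := by positivity
    have h6 : 0 ≤ l*(t*B - b^2) := mul_nonneg hl0.le (sub_nonneg.mpr hbb2)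
    have h7 : 0 ≤ l^2*t*(t*B - b^2) :=
      mul_nonneg (mul_nonneg (sq_nonneg l) ht0.le) (sub_nonneg.mpr hbb2)
    have hAval : A = (a^2 + 2*l*B)/2 := by
      rw [halt] at hEid
      linarith
    have key : (a + l*b)^2 * (2*t) ≤ ((a^2+2*l*B)/2*(2+l*t)) * (2*t) := by
      nlinarith [h4, h6, h7]
    have key2 : (a+l*b)^2 ≤ (a^2+2*l*B)/2*(2+l*t) :=
      le_of_mul_le_mul_right key (by positivity)
    rw [hAval]
    exact le_trans hF2 key2
  have hQ1 : ∀ s ∈ Ioc (0:ℝ) t,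
      ⟪∫ r in (0:ℝ)..s, w (1 - α) (s - r) • φ' r, φ' s⟫
        = c⁻¹ * ∫ l in Ioi (0:ℝ), l ^ (α-1) * ⟪φ' s, y l s⟫ := by
    intro s hs
    have hs0 : 0 < s := hs.1
    have hwre : ∀ r : ℝ, w (1-α) (s-r) = (s-r)^(-α)/Real.Gamma (1-α) := by
      intro r
      unfold w
      rw [show (1-α)-1 = -α by ring]
    have hw_int : Integrable (fun r => w (1-α) (s-r) • φ' r) (volume.restrict (Ioo 0 s)) := by
      have hmaj : IntegrableOn (fun r => (s-r)^(-α) * (M / Real.Gamma (1-α))) (Ioo 0 s) :=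
        (intble_ker h1 hs0).mul_const _
      refine hmaj.mono' ?_ ?_
      · refine AEStronglyMeasurable.smul ?_ hcont.aestronglyMeasurable
        apply Measurable.aestronglyMeasurable
        unfold w
        fun_prop
      · filter_upwards [self_mem_ae_restrict measurableSet_Ioo] with r hr
        have hsr : 0 < s - r := by linarith [hr.2]
        have hpr : ‖φ' r‖ ≤ M := hM r ⟨hr.1.le, le_trans hr.2.le hs.2⟩
        rw [hwre r, norm_smul, Real.norm_eq_abs,
          abs_of_nonneg (by positivity : (0:ℝ) ≤ (s-r)^(-α)/Real.Gamma (1-α))]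
        calc (s-r)^(-α)/Real.Gamma (1-α) * ‖φ' r‖
            ≤ (s-r)^(-α)/Real.Gamma (1-α) * M := by
              exact mul_le_mul_of_nonneg_left hpr (by positivity)
          _ = (s-r)^(-α) * (M / Real.Gamma (1-α)) := by ring
    have hLHS : (⟪∫ r in (0:ℝ)..s, w (1 - α) (s - r) • φ' r, φ' s⟫ : ℝ)
        = ∫ r in Ioo (0:ℝ) s, w (1-α) (s-r) * ⟪φ' s, φ' r⟫ := by
      rw [intervalIntegral.integral_of_le hs0.le, MeasureTheory.integral_Ioc_eq_integral_Ioo,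
        real_inner_comm, ← integral_inner hw_int (φ' s)]
      refine setIntegral_congr_fun measurableSet_Ioo (fun r hr => ?_)
      rw [real_inner_smul_right]
    set K : ℝ → ℝ → ℝ :=
      fun r ll => ll^(α-1) * Real.exp (-((s-r)*ll)) * ⟪φ' s, φ' r⟫ with hKdef
    have hKm : AEStronglyMeasurable (Function.uncurry K)
        ((volume.restrict (Ioo (0:ℝ) s)).prod (volume.restrict (Ioi (0:ℝ)))) := by
      apply Measurable.aestronglyMeasurable
      unfold Function.uncurry
      simp only [hKdef]
      apply Measurable.mul
      · fun_prop
      · exact (Continuous.inner continuous_const (hcont.comp continuous_fst)).measurable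
    have hkrep : ∀ r ∈ Ioo (0:ℝ) s,
        w (1-α) (s-r) * ⟪φ' s, φ' r⟫ = c⁻¹ * ∫ l in Ioi (0:ℝ), K r l := by
      intro r hr
      have hsr : 0 < s - r := by linarith [hr.2]
      have hval : ∫ l in Ioi (0:ℝ), K r l = ((s-r)^(-α) * Real.Gamma α) * ⟪φ' s, φ' r⟫ := by
        simp only [hKdef]
        rw [MeasureTheory.integral_mul_const, gamma_scaled h0 hsr]
      rw [hval, hwre r, hc]
      field_simp
    have hintK : Integrable (Function.uncurry K)
        ((volume.restrict (Ioo (0:ℝ) s)).prod (volume.restrict (Ioi (0:ℝ)))) := by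
      rw [MeasureTheory.integrable_prod_iff hKm]
      constructor
      · filter_upwards [self_mem_ae_restrict measurableSet_Ioo] with r hr
        have hsr : 0 < s - r := by linarith [hr.2]
        have hi : Integrable (fun ll : ℝ => (ll^(α-1) * Real.exp (-((s-r)*ll))) * (⟪φ' s, φ' r⟫ : ℝ))
            (volume.restrict (Ioi (0:ℝ))) := (intble_scaled h0 hsr).mul_const _
        exact hi
      · have hnormeq : ∀ r ∈ Ioo (0:ℝ) s,
            (∫ l in Ioi (0:ℝ), ‖K r l‖) = (s-r)^(-α) * (Real.Gamma α * |⟪φ' s, φ' r⟫|) := by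
          intro r hr
          have hsr : 0 < s - r := by linarith [hr.2]
          have : ∀ l ∈ Ioi (0:ℝ), ‖K r l‖ = (l^(α-1) * Real.exp (-((s-r)*l))) * |⟪φ' s, φ' r⟫| := by
            intro l hl
            simp only [hKdef]
            rw [Real.norm_eq_abs, abs_mul, abs_mul,
              abs_of_nonneg (Real.rpow_nonneg (le_of_lt hl) _),
              abs_of_pos (Real.exp_pos _)]
          rw [setIntegral_congr_fun measurableSet_Ioi this,
            MeasureTheory.integral_mul_const, gamma_scaled h0 hsr]
          ring
        have hmaj2 : IntegrableOn (fun r => (s-r)^(-α) * (Real.Gamma α * (M*M))) (Ioo 0 s) :=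
          (intble_ker h1 hs0).mul_const _
        refine hmaj2.mono' ?_ ?_
        · exact (hKm.norm).integral_prod_right'
        · filter_upwards [self_mem_ae_restrict measurableSet_Ioo] with r hr
          have hsr : 0 < s - r := by linarith [hr.2]
          have hip : |(⟪φ' s, φ' r⟫ : ℝ)| ≤ M * M := by
            refine le_trans (abs_real_inner_le_norm _ _) ?_
            exact mul_le_mul (hM s ⟨hs.1.le, hs.2⟩) (hM r ⟨hr.1.le, le_trans hr.2.le hs.2⟩)
              (norm_nonneg _) hM0
          simp only [Function.uncurry_apply_pair]
          rw [Real.norm_eq_abs, abs_of_nonneg (by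
            exact MeasureTheory.integral_nonneg (fun l => norm_nonneg _)), hnormeq r hr]
          have hker_nn : (0:ℝ) ≤ (s-r)^(-α) := Real.rpow_nonneg hsr.le _
          calc (s-r)^(-α) * (Real.Gamma α * |⟪φ' s, φ' r⟫|)
              ≤ (s-r)^(-α) * (Real.Gamma α * (M*M)) := by
                refine mul_le_mul_of_nonneg_left ?_ hker_nn
                exact mul_le_mul_of_nonneg_left hip hΓα.le
            _ = (s-r)^(-α) * (Real.Gamma α * (M*M)) := rfl
    have hswap := MeasureTheory.integral_integral_swap (f := K) hintK
    have hinner : ∀ l ∈ Ioi (0:ℝ),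
        (∫ r in Ioo (0:ℝ) s, K r l) = l^(α-1) * ⟪φ' s, y l s⟫ := by
      intro l hl
      have hcky : Continuous fun r : ℝ => Real.exp (-(l*(s-r))) • φ' r :=
        (Real.continuous_exp.comp
          ((continuous_const.mul (continuous_const.sub continuous_id)).neg)).smul hcont
      have hyint : Integrable (fun r => Real.exp (-(l*(s-r))) • φ' r)
          (volume.restrict (Ioo 0 s)) := by
        have := (hcky.intervalIntegrable (μ := volume) 0 s)
        rwa [intervalIntegrable_iff_integrableOn_Ioo_of_le hs0.le] at this
      have hyIoo : ∫ r in Ioo (0:ℝ) s, Real.exp (-(l*(s-r))) • φ' r = y l s := by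
        rw [hya l s, intervalIntegral.integral_of_le hs0.le,
          MeasureTheory.integral_Ioc_eq_integral_Ioo]
      calc ∫ r in Ioo (0:ℝ) s, K r l
          = ∫ r in Ioo (0:ℝ) s, l^(α-1) * ⟪φ' s, Real.exp (-(l*(s-r))) • φ' r⟫ := by
            refine setIntegral_congr_fun measurableSet_Ioo (fun r hr => ?_)
            simp only [hKdef]
            rw [real_inner_smul_right, show -((s-r)*l) = -(l*(s-r)) by ring]
            ring
        _ = l^(α-1) * ∫ r in Ioo (0:ℝ) s, ⟪φ' s, Real.exp (-(l*(s-r))) • φ' r⟫ :=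
            MeasureTheory.integral_const_mul _ _
        _ = l^(α-1) * ⟪φ' s, y l s⟫ := by rw [integral_inner hyint, hyIoo]
    rw [hLHS, setIntegral_congr_fun measurableSet_Ioo hkrep, MeasureTheory.integral_const_mul,
      hswap, setIntegral_congr_fun measurableSet_Ioi hinner]
  have hminmax : ∀ l : ℝ, 0 < l → min t l⁻¹ ≤ max t 1 * min 1 l⁻¹ := by
    intro l hl0
    rcases le_total l 1 with hle | hle
    · have h1m : min 1 l⁻¹ = 1 := min_eq_left ((one_le_inv₀ hl0).mpr hle)
      rw [h1m, mul_one]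
      exact le_trans (min_le_left _ _) (le_max_left _ _)
    · have h1m : min 1 l⁻¹ = l⁻¹ := min_eq_right (inv_le_one_of_one_le₀ hle)
      rw [h1m]
      refine le_trans (min_le_right _ _) ?_
      exact le_mul_of_one_le_left (inv_nonneg.mpr hl0.le) (le_max_right _ _)
  have hIlb : ∀ s ∈ Ioc (0:ℝ) t, ∀ l ∈ Ioi (0:ℝ),
      ‖l ^ (α-1) * ⟪φ' s, y l s⟫‖ ≤ (M * (M * max t 1)) * (l ^ (α-1) * min 1 l⁻¹) := by
    intro s hsm l hl
    have hl0 : (0:ℝ) < l := hl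
    have hrnn : (0:ℝ) ≤ l ^ (α-1) := Real.rpow_nonneg hl0.le _
    rw [Real.norm_eq_abs, abs_mul, abs_of_nonneg hrnn]
    have h5 : |(⟪φ' s, y l s⟫ : ℝ)| ≤ M * (M * min t l⁻¹) := by
      refine le_trans (abs_real_inner_le_norm _ _) ?_
      exact mul_le_mul (hM s ⟨hsm.1.le, hsm.2⟩) (hyb l hl s hsm) (norm_nonneg _) hM0
    have h6 : l^(α-1) * |(⟪φ' s, y l s⟫ : ℝ)| ≤ l^(α-1) * (M * (M * min t l⁻¹)) :=
      mul_le_mul_of_nonneg_left h5 hrnn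
    have h7 : l^(α-1) * (M * (M * min t l⁻¹)) ≤ l^(α-1) * (M * (M * (max t 1 * min 1 l⁻¹))) := by
      refine mul_le_mul_of_nonneg_left ?_ hrnn
      refine mul_le_mul_of_nonneg_left ?_ hM0
      exact mul_le_mul_of_nonneg_left (hminmax l hl0) hM0
    calc l^(α-1) * |(⟪φ' s, y l s⟫ : ℝ)| ≤ l^(α-1) * (M * (M * (max t 1 * min 1 l⁻¹))) :=
          le_trans h6 h7
      _ = (M * (M * max t 1)) * (l ^ (α-1) * min 1 l⁻¹) := by ring
  have hIl : ∀ s ∈ Ioc (0:ℝ) t,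
      Integrable (fun l => l ^ (α-1) * ⟪φ' s, y l s⟫) (volume.restrict (Ioi (0:ℝ))) := by
    intro s hsm
    refine intble_dom h0 h1 ?_ (fun l hl => hIlb s hsm l hl)
    apply Measurable.aestronglyMeasurable
    apply Measurable.mul
    · fun_prop
    · exact (Continuous.inner continuous_const
        (hycont.comp (continuous_id.prodMk continuous_const))).measurable
  have hint2 : Integrable (fun q : ℝ × ℝ => q.2 ^ (α-1) * ⟪φ' q.1, y q.2 q.1⟫)
      ((volume.restrict (Ioc (0:ℝ) t)).prod (volume.restrict (Ioi (0:ℝ)))) := by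
    have hfm : AEStronglyMeasurable (fun q : ℝ × ℝ => q.2 ^ (α-1) * ⟪φ' q.1, y q.2 q.1⟫)
        ((volume.restrict (Ioc (0:ℝ) t)).prod (volume.restrict (Ioi (0:ℝ)))) := by
      apply Measurable.aestronglyMeasurable
      apply Measurable.mul
      · fun_prop
      · exact (Continuous.inner (hcont.comp continuous_fst)
          (hycont.comp (continuous_snd.prodMk continuous_fst))).measurable
    rw [MeasureTheory.integrable_prod_iff hfm]
    constructor
    · filter_upwards [self_mem_ae_restrict measurableSet_Ioc] with s hsm
      exact hIl s hsm
    · set C1 : ℝ := (M * (M * max t 1)) * ∫ l in Ioi (0:ℝ), l ^ (α-1) * min 1 l⁻¹ with hC1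
      have hmaster := intble_master h0 h1
      refine Integrable.mono' (g := fun _ => C1)
        ((integrableOn_const_iff).mpr (Or.inr measure_Ioc_lt_top)) ?_ ?_
      · exact (hfm.norm).integral_prod_right'
      · filter_upwards [self_mem_ae_restrict measurableSet_Ioc] with s hsm
        have hintn : Integrable (fun l => ‖l ^ (α-1) * ⟪φ' s, y l s⟫‖)
            (volume.restrict (Ioi (0:ℝ))) := (hIl s hsm).norm
        have hmono := MeasureTheory.integral_mono_ae hintn (hmaster.const_mul (M * (M * max t 1)))
          (by
            filter_upwards [self_mem_ae_restrict measurableSet_Ioi] with l hl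
            exact hIlb s hsm l hl)
        rw [Real.norm_eq_abs, abs_of_nonneg (MeasureTheory.integral_nonneg (fun l => norm_nonneg _))]
        calc (∫ l in Ioi (0:ℝ), ‖l ^ (α-1) * ⟪φ' s, y l s⟫‖) ≤
              ∫ l in Ioi (0:ℝ), (M * (M * max t 1)) * (l ^ (α-1) * min 1 l⁻¹) := hmono
          _ = C1 := MeasureTheory.integral_const_mul _ _
  have hQrep : (∫ s in (0:ℝ)..t, ⟪∫ r in (0:ℝ)..s, w (1 - α) (s - r) • φ' r, φ' s⟫)
      = c⁻¹ * ∫ l in Ioi (0:ℝ), l ^ (α-1) * ∫ s in Ioc (0:ℝ) t, ⟪φ' s, y l s⟫ := by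
    rw [intervalIntegral.integral_of_le ht0.le,
      setIntegral_congr_fun measurableSet_Ioc hQ1, MeasureTheory.integral_const_mul]
    congr 1
    have hswap2 := MeasureTheory.integral_integral_swap
      (f := fun s l => l ^ (α-1) * (⟪φ' s, y l s⟫ : ℝ)) hint2
    rw [hswap2]
    exact setIntegral_congr_fun measurableSet_Ioi
      (fun l _ => MeasureTheory.integral_const_mul _ _)
  have hEint : Integrable (fun l => l ^ (α-1) * ∫ s in Ioc (0:ℝ) t, ⟪φ' s, y l s⟫)
      (volume.restrict (Ioi (0:ℝ))) := by
    have h2 : Integrable (fun l => ∫ s in Ioc (0:ℝ) t, l ^ (α-1) * ⟪φ' s, y l s⟫)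
        (volume.restrict (Ioi (0:ℝ))) := by
      have := (hint2.swap).integral_prod_left
      exact this
    refine h2.congr (Filter.Eventually.of_forall (fun l => ?_))
    exact MeasureTheory.integral_const_mul _ _
  have hlow : 2 ^ (α-1) * t ^ (-α) * ‖φ t‖ ^ 2
      ≤ (∫ s in (0:ℝ)..t, ⟪∫ r in (0:ℝ)..s, w (1 - α) (s - r) • φ' r, φ' s⟫) := by
    have hblow : IntegrableOn (fun l : ℝ => l ^ (α-1) / (2 + l*t)) (Ioi (0:ℝ)) := by
      refine intble_dom (C := max 2⁻¹ t⁻¹) h0 h1 ?_ ?_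
      · apply Measurable.aestronglyMeasurable
        fun_prop
      · intro l hl
        have hl0 : (0:ℝ) < l := hl
        have hrnn : (0:ℝ) ≤ l ^ (α-1) := Real.rpow_nonneg hl0.le _
        have hd : (0:ℝ) < 2 + l*t := by nlinarith
        rw [Real.norm_eq_abs, abs_of_nonneg (by positivity)]
        have hfrac : (2 + l*t)⁻¹ ≤ max 2⁻¹ t⁻¹ * min 1 l⁻¹ := by
          rcases le_total l 1 with hle | hle
          · have h1m : min 1 l⁻¹ = 1 := min_eq_left ((one_le_inv₀ hl0).mpr hle)
            rw [h1m, mul_one]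
            refine le_trans ?_ (le_max_left _ _)
            rw [inv_le_inv₀ hd two_pos]
            nlinarith
          · have h1m : min 1 l⁻¹ = l⁻¹ := min_eq_right (inv_le_one_of_one_le₀ hle)
            rw [h1m]
            have hlt : (0:ℝ) < l * t := mul_pos hl0 ht0
            have step : (2 + l*t)⁻¹ ≤ (l*t)⁻¹ := by
              rw [inv_le_inv₀ hd hlt]
              linarith
            refine le_trans step ?_
            rw [mul_inv]
            rw [mul_comm]
            exact mul_le_mul_of_nonneg_right (le_max_right _ _) (inv_nonneg.mpr hl0.le)
        calc l ^ (α-1) / (2 + l*t) = l ^ (α-1) * (2 + l*t)⁻¹ := div_eq_mul_inv _ _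
          _ ≤ l ^ (α-1) * (max 2⁻¹ t⁻¹ * min 1 l⁻¹) := mul_le_mul_of_nonneg_left hfrac hrnn
          _ = max 2⁻¹ t⁻¹ * (l ^ (α-1) * min 1 l⁻¹) := by ring
    have hEcomp : ∫ l in Ioi (0:ℝ), ‖φ t‖^2 * (l ^ (α-1) / (2 + l*t))
        = ‖φ t‖^2 * (2 ^ (α-1) * t ^ (-α) * c) := by
      rw [MeasureTheory.integral_const_mul, beta2 h0 h1 ht0]
    have hmono2 : ∫ l in Ioi (0:ℝ), ‖φ t‖^2 * (l ^ (α-1) / (2 + l*t))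
        ≤ ∫ l in Ioi (0:ℝ), l ^ (α-1) * ∫ s in Ioc (0:ℝ) t, ⟪φ' s, y l s⟫ := by
      refine MeasureTheory.setIntegral_mono_on (hblow.const_mul _) hEint measurableSet_Ioi ?_
      intro l hl
      have hl0 : (0:ℝ) < l := hl
      have hrnn : (0:ℝ) ≤ l ^ (α-1) := Real.rpow_nonneg hl0.le _
      have := mul_le_mul_of_nonneg_left (hElb l hl) hrnn
      calc ‖φ t‖^2 * (l ^ (α-1) / (2 + l*t)) = l ^ (α-1) * (‖φ t‖^2 / (2 + l*t)) := by ring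
        _ ≤ l ^ (α-1) * ∫ s in Ioc (0:ℝ) t, ⟪φ' s, y l s⟫ := this
    rw [hQrep]
    have hfinal : ‖φ t‖^2 * (2 ^ (α-1) * t ^ (-α) * c)
        ≤ ∫ l in Ioi (0:ℝ), l ^ (α-1) * ∫ s in Ioc (0:ℝ) t, ⟪φ' s, y l s⟫ := by
      rw [← hEcomp]; exact hmono2
    have := mul_le_mul_of_nonneg_left hfinal (inv_nonneg.mpr hcpos.le)
    calc 2 ^ (α-1) * t ^ (-α) * ‖φ t‖ ^ 2
        = c⁻¹ * (‖φ t‖^2 * (2 ^ (α-1) * t ^ (-α) * c)) := by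
          field_simp
      _ ≤ c⁻¹ * ∫ l in Ioi (0:ℝ), l ^ (α-1) * ∫ s in Ioc (0:ℝ) t, ⟪φ' s, y l s⟫ := this
  -- endgame
  set Q : ℝ := ∫ s in (0:ℝ)..t, ⟪∫ r in (0:ℝ)..s, w (1 - α) (s - r) • φ' r, φ' s⟫ with hQdef
  have hQnn : 0 ≤ Q := le_trans (by positivity) hlow
  have h2a : α^2 ≤ 2 ^ (α-1) := by
    have hrw : (2:ℝ) ^ (α-1) = Real.exp (Real.log 2 * (α-1)) := by
      rw [Real.rpow_def_of_pos two_pos]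
    have hexp := Real.add_one_le_exp (Real.log 2 * (α-1))
    have hl2 : Real.log 2 < 1 := by
      have := Real.log_two_lt_d9
      linarith
    have hl2p : 0 < Real.log 2 := Real.log_pos one_lt_two
    rw [hrw]
    nlinarith [hexp, hl2, hl2p, sq_nonneg (1-α)]
  have hcan : (2:ℝ)^(α-1) * 2^(1-α) = 1 := by
    rw [← Real.rpow_add two_pos]
    norm_num
  have hcan2 : t^(-α) * t^α = 1 := by
    rw [← Real.rpow_add ht0]
    norm_num
  have hkey : ‖φ t‖^2 ≤ 2^(1-α) * t^α * Q := by
    have hone : (2:ℝ)^(1-α) * t^α * (2^(α-1) * t^(-α)) = 1 := by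
      rw [show (2:ℝ)^(1-α) * t^α * (2^(α-1) * t^(-α))
        = (2^(α-1) * 2^(1-α)) * (t^(-α) * t^α) by ring, hcan, hcan2, mul_one]
    calc ‖φ t‖^2 = (2^(1-α) * t^α * (2^(α-1) * t^(-α))) * ‖φ t‖^2 := by
          rw [hone, one_mul]
      _ = (2^(1-α) * t^α) * (2^(α-1) * t^(-α) * ‖φ t‖^2) := by ring
      _ ≤ (2^(1-α) * t^α) * Q := by
          refine mul_le_mul_of_nonneg_left hlow (by positivity)
  have hcoef : (2:ℝ)^(1-α) * t^α ≤ t^α / α^2 := by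
    have hinv : (2:ℝ)^(1-α) ≤ (α^2)⁻¹ := by
      have h2pos : (0:ℝ) < 2^(α-1) := Real.rpow_pos_of_pos two_pos _
      have : (2:ℝ)^(1-α) = (2^(α-1))⁻¹ := by
        rw [show (1-α) = -(α-1) by ring, Real.rpow_neg two_pos.le]
      rw [this]
      exact inv_anti₀ (by positivity) h2a
    calc (2:ℝ)^(1-α) * t^α ≤ (α^2)⁻¹ * t^α :=
          mul_le_mul_of_nonneg_right hinv (Real.rpow_nonneg ht0.le _)
      _ = t^α / α^2 := by ring
  calc ‖φ t‖^2 ≤ 2^(1-α) * t^α * Q := hkey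
    _ ≤ (t^α / α^2) * Q := mul_le_mul_of_nonneg_right hcoef hQnn
end

section
/- Multi-term generalized Leibniz identity: let 0 < α_m ≤ ⋯ ≤ α_1 ≤ α < 1, b_i > 0, and define P(∂_t)φ = ∂_t^α φ + Σ b_i ∂_t^{α_i} φ (Caputo derivatives) and Q(I)φ = α I^{1−α} φ + Σ α_i b_i I^{1−α_i} φ. Then for φ ∈ C^1([0,T]) with φ(0) = 0, P(∂_t)(t φ(t)) = t P(∂_t) φ(t) + Q(I) φ(t). -/
/-- Caputo fractional derivative of order `β` (given the derivative `φ'`). -/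
noncomputable def caputo (β : ℝ) (φ' : ℝ → ℝ) (t : ℝ) : ℝ :=
  ∫ s in (0:ℝ)..t, w (1 - β) (t - s) * φ' s

section aux

variable (β t : ℝ) (φ φ' : ℝ → ℝ)

lemma int_rpow (hβ1 : β < 1) (ht : 0 < t) :
    IntervalIntegrable (fun s => (t - s) ^ (-β)) MeasureTheory.volume 0 t := by
  have h := intervalIntegral.intervalIntegrable_rpow' (a := 0) (b := t)
    (r := -β) (by linarith)
  have := (h.comp_sub_left t).symm
  simpa using this

lemma key (hβ0 : 0 < β) (hβ1 : β < 1) (ht : 0 < t)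
    (hderiv : ∀ s, HasDerivAt φ (φ' s) s) (hcont : Continuous φ') (hφ0 : φ 0 = 0) :
    caputo β (fun s => φ s + s * φ' s) t
      = t * caputo β φ' t + β * ∫ s in (0:ℝ)..t, w (1 - β) (t - s) * φ s := by
  have hΓ : 0 < Real.Gamma (1 - β) := Real.Gamma_pos_of_pos (by linarith)
  set c : ℝ := (Real.Gamma (1 - β))⁻¹ with hc
  have hne1 : (1:ℝ) - β ≠ 0 := ne_of_gt (by linarith)
  have hneβ : -β ≠ 0 := neg_ne_zero.mpr (ne_of_gt hβ0)
  have hφcont : Continuous φ := continuous_iff_continuousAt.mpr fun x => (hderiv x).continuousAt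
  have hw : ∀ x : ℝ, w (1 - β) x = x ^ (-β) / Real.Gamma (1 - β) := by
    intro x; simp [w, show (1:ℝ) - β - 1 = -β by ring]
  -- integrabilities
  have int1 := int_rpow β t hβ1 ht
  have intφ : IntervalIntegrable (fun s => (t - s) ^ (-β) * φ s)
      MeasureTheory.volume 0 t := int1.mul_continuousOn hφcont.continuousOn
  have intφ' : IntervalIntegrable (fun s => (t - s) ^ (-β) * φ' s)
      MeasureTheory.volume 0 t := int1.mul_continuousOn hcont.continuousOn
  have hcont1 : Continuous (fun s : ℝ => (t - s) ^ (1 - β)) := by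
    have : Continuous (fun x : ℝ => x ^ (1 - β)) :=
      continuous_iff_continuousAt.mpr fun x =>
        Real.continuousAt_rpow_const x _ (Or.inr (by linarith))
    exact this.comp (continuous_const.sub continuous_id)
  have int2 : IntervalIntegrable (fun s => (t - s) ^ (1 - β) * φ' s)
      MeasureTheory.volume 0 t := (hcont1.mul hcont).intervalIntegrable 0 t
  have eneg : (fun s => -((1 - β) * (t - s) ^ (-β)) * φ s)
      = fun s => (β - 1) * ((t - s) ^ (-β) * φ s) := by funext s; ring
  have intneg : IntervalIntegrable (fun s => -((1 - β) * (t - s) ^ (-β)) * φ s)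
      MeasureTheory.volume 0 t := by rw [eneg]; exact intφ.const_mul _
  -- integration by parts via FTC
  have hF' : ∀ s ∈ Set.Ioo 0 t,
      HasDerivAt (fun s => (t - s) ^ (1 - β) * φ s)
        (-((1 - β) * (t - s) ^ (-β)) * φ s + (t - s) ^ (1 - β) * φ' s) s := by
    intro s hs
    have hts : (0:ℝ) < t - s := by simp only [Set.mem_Ioo] at hs; linarith [hs.2]
    have h1 : HasDerivAt (fun s : ℝ => t - s) (-1) s := (hasDerivAt_id s).const_sub t
    have h2 : HasDerivAt (fun x : ℝ => x ^ (1 - β)) ((1 - β) * (t - s) ^ (1 - β - 1)) (t - s) :=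
      Real.hasDerivAt_rpow_const (Or.inl (ne_of_gt hts))
    have h3 := (h2.comp s h1).mul (hderiv s)
    refine h3.congr_deriv ?_
    simp only [Function.comp_apply]
    rw [show (1:ℝ) - β - 1 = -β by ring]; ring
  have hFcont : ContinuousOn (fun s => (t - s) ^ (1 - β) * φ s) (Set.Icc 0 t) :=
    (hcont1.mul hφcont).continuousOn
  have intF' : IntervalIntegrable
      (fun s => -((1 - β) * (t - s) ^ (-β)) * φ s + (t - s) ^ (1 - β) * φ' s)
      MeasureTheory.volume 0 t := intneg.add int2
  have hFTC := intervalIntegral.integral_eq_sub_of_hasDeriv_right_of_le (le_of_lt ht)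
    hFcont (fun x hx => (hF' x hx).hasDerivWithinAt) intF'
  have hbd : ((t - t) ^ (1 - β) * φ t) - ((t - 0) ^ (1 - β) * φ 0) = 0 := by
    simp [hφ0, Real.zero_rpow hne1]
  rw [hbd] at hFTC
  have hibp : (∫ s in (0:ℝ)..t, (t - s) ^ (1 - β) * φ' s)
      = (1 - β) * ∫ s in (0:ℝ)..t, (t - s) ^ (-β) * φ s := by
    rw [intervalIntegral.integral_add intneg int2] at hFTC
    rw [eneg, intervalIntegral.integral_const_mul] at hFTC
    linarith [hFTC]
  -- main pointwise identity
  have hEq : Set.EqOn (fun s => w (1 - β) (t - s) * (φ s + s * φ' s))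
      (fun s => t * (w (1 - β) (t - s) * φ' s)
        + (c * ((t - s) ^ (-β) * φ s) - c * ((t - s) ^ (1 - β) * φ' s)))
      (Set.uIcc 0 t) := by
    intro s hs
    rw [Set.uIcc_of_le (le_of_lt ht)] at hs
    obtain ⟨hs0, hst⟩ := hs
    simp only [hw]
    rcases eq_or_lt_of_le hst with h | h
    · rw [h]
      simp [Real.zero_rpow hneβ, Real.zero_rpow hne1]
    · have hts : (0:ℝ) < t - s := by linarith
      have hr : (t - s) ^ ((1:ℝ) - β) = (t - s) * (t - s) ^ (-β) := by
        rw [show (1:ℝ) - β = 1 + -β by ring, Real.rpow_add hts, Real.rpow_one]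
      rw [hr, hc]; field_simp; ring
  have e1 : (fun s => t * (w (1 - β) (t - s) * φ' s))
      = fun s => (t * c) * ((t - s) ^ (-β) * φ' s) := by
    funext s; rw [hw, hc]; field_simp
  have hA : IntervalIntegrable (fun s => t * (w (1 - β) (t - s) * φ' s))
      MeasureTheory.volume 0 t := by rw [e1]; exact intφ'.const_mul _
  have hB : IntervalIntegrable
      (fun s => c * ((t - s) ^ (-β) * φ s) - c * ((t - s) ^ (1 - β) * φ' s))
      MeasureTheory.volume 0 t := by
    refine IntervalIntegrable.sub (intφ.const_mul _) ?_
    have e2 : (fun s => c * ((t - s) ^ (1 - β) * φ' s))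
        = fun s => c * ((t - s) ^ (1 - β) * φ' s) := rfl
    exact int2.const_mul _
  have e3 : (fun s => w (1 - β) (t - s) * φ s)
      = fun s => c * ((t - s) ^ (-β) * φ s) := by
    funext s; rw [hw, hc]; field_simp
  unfold caputo
  rw [intervalIntegral.integral_congr hEq,
    intervalIntegral.integral_add hA hB,
    intervalIntegral.integral_const_mul,
    intervalIntegral.integral_sub (intφ.const_mul _) (int2.const_mul _),
    intervalIntegral.integral_const_mul, intervalIntegral.integral_const_mul,
    hibp, e3, intervalIntegral.integral_const_mul]
  ring

end aux

theorem multiterm_Leibniz (T α : ℝ) (hT : 0 < T) (h0 : 0 < α) (h1 : α < 1)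
    (m : ℕ) (a b : Fin m → ℝ)
    (ha0 : ∀ i, 0 < a i) (haα : ∀ i, a i ≤ α) (hmono : Antitone a)
    (hb : ∀ i, 0 < b i)
    (φ φ' : ℝ → ℝ) (hderiv : ∀ s, HasDerivAt φ (φ' s) s) (hcont : Continuous φ')
    (hφ0 : φ 0 = 0) (t : ℝ) (ht : t ∈ Set.Ioc (0:ℝ) T) :
    (caputo α (fun s => φ s + s * φ' s) t
        + ∑ i, b i * caputo (a i) (fun s => φ s + s * φ' s) t)
      = t * (caputo α φ' t + ∑ i, b i * caputo (a i) φ' t)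
        + (α * (∫ s in (0:ℝ)..t, w (1 - α) (t - s) * φ s)
            + ∑ i, a i * b i * (∫ s in (0:ℝ)..t, w (1 - a i) (t - s) * φ s)) := by
  obtain ⟨ht0, htT⟩ := ht
  have hkα := key α t φ φ' h0 h1 ht0 hderiv hcont hφ0
  have hki : ∀ i, caputo (a i) (fun s => φ s + s * φ' s) t
      = t * caputo (a i) φ' t
        + a i * ∫ s in (0:ℝ)..t, w (1 - a i) (t - s) * φ s := fun i =>
    key (a i) t φ φ' (ha0 i) (lt_of_le_of_lt (haα i) h1) ht0 hderiv hcont hφ0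
  rw [hkα]
  rw [Finset.sum_congr rfl fun i _ => by rw [hki i]]
  rw [Finset.sum_congr rfl (fun i (_ : i ∈ Finset.univ) => by
    show b i * _ = t * (b i * caputo (a i) φ' t)
        + a i * b i * ∫ s in (0:ℝ)..t, w (1 - a i) (t - s) * φ s
    ring)]
  rw [Finset.sum_add_distrib, ← Finset.mul_sum]
  ring
end
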